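/- arXiv:1609.06509 — 2 statements merged into one kernel-verified Lean document; each statement's English description precedes it below -/
import Mathlib

section
/- Let (x_k) be a block sequence in X_ius with ‖x_k‖_K̃ ≤ σ_k for all k, let f ∈ K and let (f_α)_{α∈A} be a tree of f. Set y_k = x_k restricted to ∪_{α∈F_f} supp(f_α). Then |f(y_k)| ≤ 2σ_k for every k. -/
open scoped BigOperators
open Classical

noncomputable section

/-- `c00`: the finitely supported real sequences on `ℕ`. -/
abbrev c00 : Type := ℕ →₀ ℝ

namespace Ius

/-- The unit vector `e_k` (also written `e_k^*` when viewed as a functional). -/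
def e (k : ℕ) : c00 := Finsupp.single k 1

/-- The pairing `f(x) = ∑ k, f k * x k`. -/
def dot (f x : c00) : ℝ := x.sum fun k v => f k * v

/-- Every element of `A` is smaller than every element of `B`. -/
def suppLt (A B : Finset ℕ) : Prop := ∀ a ∈ A, ∀ b ∈ B, a < b

/-- `x < y` for finitely supported vectors: `max supp x < min supp y`. -/
def blockLt (x y : c00) : Prop := suppLt x.support y.support

/-- `max supp x` (junk value `0` if the support is empty). -/
def maxSupp (x : c00) : ℕ := WithBot.unbotD 0 x.support.max

/-- `min supp x` (junk value `0` if the support is empty). -/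
def minSupp (x : c00) : ℕ := WithTop.untopD 0 x.support.min

/-- `range x`: the smallest integer interval containing `supp x`. -/
def rangeI (x : c00) : Finset ℕ :=
  if h : x.support.Nonempty then Finset.Icc (x.support.min' h) (x.support.max' h) else ∅

/-- `E ⊆ ℕ` is an interval. -/
def IsInterval (E : Set ℕ) : Prop := ∀ a ∈ E, ∀ b ∈ E, ∀ c : ℕ, a ≤ c → c ≤ b → c ∈ E

/-- Restriction `E x` of a vector `x` to a set of coordinates `E`. -/
def restrictTo (E : Set ℕ) (x : c00) : c00 :=
  letI := Classical.decPred fun k => k ∈ E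
  Finsupp.filter (fun k => k ∈ E) x

/-- A block sequence: successive nonzero vectors. -/
def IsBlockSeq (x : ℕ → c00) : Prop := ∀ k, x k ≠ 0 ∧ blockLt (x k) (x (k + 1))

/-- A vector with rational coordinates. -/
def IsRat (x : c00) : Prop := ∀ k, ∃ q : ℚ, x k = (q : ℝ)

/-- The set `Q`: finitely supported, nonzero rational sequences with sup-norm at most 1. -/
def Qset : Set c00 := {x | x ≠ 0 ∧ IsRat x ∧ ∀ k, |x k| ≤ 1}

/-- The set `Q_s` of tuples `(x_1,f_1,…,x_n,f_n)` of elements of `Q` with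
`range(x_i) ∪ range(f_i) < range(x_{i+1}) ∪ range(f_{i+1})`. -/
def QsSet : Set (List (c00 × c00)) :=
  {φ | φ ≠ [] ∧ (∀ p ∈ φ, p.1 ∈ Qset ∧ p.2 ∈ Qset) ∧
    φ.Chain' fun p q => suppLt (p.1.support ∪ p.2.support) (q.1.support ∪ q.2.support)}

/-- The parameters `(m_j)`, `(n_j)`, `(s_j)` of the construction. -/
structure Params where
  m : ℕ → ℕ
  n : ℕ → ℕ
  s : ℕ → ℕ
  m_one : m 1 = 2
  m_rec : ∀ j, 1 ≤ j → m (j + 1) = m j ^ 5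
  n_one : n 1 = 4
  n_rec : ∀ j, 1 ≤ j → n (j + 1) = (4 * n j) ^ s j
  s_pos : ∀ j, 1 ≤ j → 1 ≤ s j
  s_big : ∀ j, 1 ≤ j → m (j + 1) ^ 3 ≤ 2 ^ s j

/-- The coding function `σ`: an injection from `Q_s` into the even positive integers,
increasing along extensions, with `max (range(x_n) ∪ range(f_n)) ≤ m_{σ(φ)}^{1/2}`. -/
structure Coding (P : Params) where
  σ : List (c00 × c00) → ℕ
  even_pos : ∀ φ ∈ QsSet, ∃ k, 1 ≤ k ∧ σ φ = 2 * k
  inj : Set.InjOn σ QsSet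
  mono : ∀ φ ∈ QsSet, φ.dropLast ∈ QsSet → σ φ.dropLast < σ φ
  bound : ∀ φ ∈ QsSet, ∀ p ∈ φ.getLast?, ∀ a ∈ p.1.support ∪ p.2.support,
    (a : ℝ) ≤ Real.sqrt (P.m (σ φ))

/-- `x_i`: the `i`-th (1-indexed) vector entry of a tuple in `Q_s`. -/
def xC (φ : List (c00 × c00)) (i : ℕ) : c00 := (φ.getD (i - 1) (0, 0)).1

/-- `f_i`: the `i`-th (1-indexed) functional entry of a tuple in `Q_s`. -/
def fC (φ : List (c00 × c00)) (i : ℕ) : c00 := (φ.getD (i - 1) (0, 0)).2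

/-- `φ_i = (x_1,f_1,…,x_i,f_i)`: the prefix of length `i`. -/
def pref (φ : List (c00 × c00)) (i : ℕ) : List (c00 × c00) := φ.take i

/-- `K_0 = {± e_n^*}`. -/
def K0set : Set c00 := {f | ∃ k, f = e k ∨ f = -e k}

/-- The condition on `(x_1, f_1)` of a special sequence of length `2k`. -/
def headCond (P : Params) (k : ℕ) (x f : c00) : Prop :=
  ∃ j, 1 ≤ j ∧ (2 * k : ℝ) < Real.sqrt (P.m (2 * j)) ∧
    ∃ F : Finset ℕ, F.card = P.n (2 * j) ∧
      x = ((P.n (2 * j) : ℝ))⁻¹ • ∑ l ∈ F, e l ∧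
      f = ((P.m (2 * j) : ℝ))⁻¹ • ∑ l ∈ F, e l

/-- `φ` is a special sequence (of length `2k` for some `k ≥ 1`). -/
def IsSpecialSeq (P : Params) (C : Coding P) (φ : List (c00 × c00)) : Prop :=
  φ ∈ QsSet ∧ ∃ k, 1 ≤ k ∧ φ.length = 2 * k ∧
    headCond P k (xC φ 1) (fC φ 1) ∧
    (∀ i, 1 ≤ i → i ≤ k →
      (∀ t, |fC φ (2 * i) t| ≤ ((P.m (C.σ (pref φ (2 * i - 1))) : ℝ))⁻¹) ∧
      |dot (fC φ (2 * i)) (xC φ (2 * i))| ≤ ((P.m (C.σ (pref φ (2 * i - 1))) : ℝ))⁻¹) ∧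
    (∀ i, 1 ≤ i → i < k →
      ∃ F : Finset ℕ, F.card = P.n (C.σ (pref φ (2 * i))) ∧
        xC φ (2 * i + 1) = ((P.n (C.σ (pref φ (2 * i))) : ℝ))⁻¹ • ∑ l ∈ F, e l ∧
        fC φ (2 * i + 1) = ((P.m (C.σ (pref φ (2 * i))) : ℝ))⁻¹ • ∑ l ∈ F, e l)

/-- The condition defining the coefficients `λ_{f'_{2i}}`. -/
def lamCond (P : Params) (C : Coding P) (j : ℕ) (φ : List (c00 × c00))
    (f' : ℕ → c00) (lam : ℕ → ℝ) (i : ℕ) : Prop :=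
  (dot (f' i) (xC φ (2 * i)) ≠ 0 →
    lam i = dot (f' i) (((P.m (C.σ (pref φ (2 * i - 1))) : ℝ)) • xC φ (2 * i))) ∧
  (dot (f' i) (xC φ (2 * i)) = 0 →
    lam i = 1 / (P.n (2 * j + 1) : ℝ) ^ 2 ∨ lam i = -(1 / (P.n (2 * j + 1) : ℝ) ^ 2))

/-- The set `K_{n,φ}^{2j+1}` built from a special sequence `φ` over a previous level `prev`. -/
def KphiSet (P : Params) (C : Coding P) (prev : ℕ → Set c00) (j : ℕ)
    (φ : List (c00 × c00)) : Set c00 :=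
  {f | ∃ ε : ℝ, (ε = 1 ∨ ε = -1) ∧ ∃ E : Set ℕ, IsInterval E ∧
    ∃ (f' : ℕ → c00) (lam : ℕ → ℝ),
      (∀ i, 1 ≤ i → 2 * i ≤ P.n (2 * j + 1) →
        f' i ∈ prev (C.σ (pref φ (2 * i - 1))) ∧
        (f' i).support = (fC φ (2 * i)).support ∧
        (∀ g ∈ prev (C.σ (pref φ (2 * i - 1))),
          |dot g (xC φ (2 * i))| ≤ ((P.m (C.σ (pref φ (2 * i - 1))) : ℝ))⁻¹) ∧
        lamCond P C j φ f' lam i) ∧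
      f = (ε * ((P.m (2 * j + 1) : ℝ))⁻¹) •
        restrictTo E (∑ i ∈ Finset.Icc 1 (P.n (2 * j + 1) / 2),
          (lam i • fC φ (2 * i - 1) + f' i))}

/-- Admissibility of a special sequence `φ` at a given level:
`f_{2i} ∈ K_{n-1}^{σ(φ_{2i-1})}`. -/
def SpecialAdm (P : Params) (C : Coding P) (prev : ℕ → Set c00) (j : ℕ)
    (φ : List (c00 × c00)) : Prop :=
  IsSpecialSeq P C φ ∧ φ.length = P.n (2 * j + 1) ∧
    ∀ i, 1 ≤ i → 2 * i ≤ P.n (2 * j + 1) →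
      fC φ (2 * i) ∈ prev (C.σ (pref φ (2 * i - 1)))

/-- The even operation `(A_{n_{2j}}, 1/m_{2j})`. -/
def evenStep (P : Params) (prev : ℕ → Set c00) (j : ℕ) : Set c00 :=
  {f | ∃ fs : List c00, fs ≠ [] ∧ fs.length ≤ P.n (2 * j) ∧
    (∀ g ∈ fs, ∃ j', g ∈ prev j') ∧ fs.Chain' blockLt ∧
    f = ((P.m (2 * j) : ℝ))⁻¹ • fs.sum}

/-- The odd (special functional) operation. -/
def oddStep (P : Params) (C : Coding P) (prev : ℕ → Set c00) (j : ℕ) : Set c00 :=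
  ⋃ φ ∈ {ψ : List (c00 × c00) | SpecialAdm P C prev j ψ}, KphiSet P C prev j φ

/-- The inductively defined family `K_n^j`. -/
def KF (P : Params) (C : Coding P) : ℕ → ℕ → Set c00
  | 0, j => if j = 0 then K0set else ∅
  | N + 1, j =>
      if j = 0 then K0set
      else if j = 1 then ∅
      else if j % 2 = 0 then KF P C N j ∪ evenStep P (KF P C N) (j / 2)
      else KF P C N j ∪ oddStep P C (KF P C N) (j / 2)

/-- The norming set `K = ⋃_n ⋃_j K_n^j` of the space `X_ius`. -/
def Kset (P : Params) (C : Coding P) : Set c00 := ⋃ N, ⋃ j, KF P C N j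

/-- `f` has weight `w(f) = m_j`, i.e. `f ∈ K_n^j` for some `n ≥ 1`. -/
def KHasWeight (P : Params) (C : Coding P) (f : c00) (w : ℕ) : Prop :=
  ∃ N j, 1 ≤ j ∧ f ∈ KF P C (N + 1) j ∧ w = P.m j

/-- The norm of `X_ius` on `c00`: `‖x‖ = sup {f(x) : f ∈ K}`. -/
def normK (P : Params) (C : Coding P) (x : c00) : ℝ :=
  sSup ((fun f => dot f x) '' Kset P C)

/-- The set `K̃`. -/
def Ktilde (P : Params) : Set c00 :=
  K0set ∪ {f | ∃ j, 1 ≤ j ∧ ∃ F : Finset ℕ, F.card ≤ P.n (2 * j) ∧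
    ∃ ε : ℕ → ℝ, (∀ i, ε i = 1 ∨ ε i = -1) ∧
      f = ((P.m (2 * j) : ℝ))⁻¹ • ∑ i ∈ F, ε i • e i} ∪ {0}

/-- `‖x‖_K̃ = sup {f(x) : f ∈ K̃}`. -/
def normKt (P : Params) (x : c00) : ℝ := sSup ((fun f => dot f x) '' Ktilde P)

/-- The norming family `W_n` of the auxiliary mixed Tsirelson space
`X_u = T[(A_{4n_j},1/m_j)_j]`. -/
def WF (P : Params) : ℕ → Set c00
  | 0 => K0set ∪ {0}
  | N + 1 => WF P N ∪ {f | ∃ j, 1 ≤ j ∧ ∃ fs : List c00, fs ≠ [] ∧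
      fs.length ≤ 4 * P.n j ∧ (∀ g ∈ fs, g ∈ WF P N) ∧ fs.Chain' blockLt ∧
      f = ((P.m j : ℝ))⁻¹ • fs.sum}

/-- The norming set `W` of `X_u`. -/
def Wset (P : Params) : Set c00 := ⋃ N, WF P N

/-- The norming family of `X_{u,k} = T[(A_{4n_j},1/m_j)_{j=1}^k]`. -/
def WFk (P : Params) (k : ℕ) : ℕ → Set c00
  | 0 => K0set ∪ {0}
  | N + 1 => WFk P k N ∪ {f | ∃ j, 1 ≤ j ∧ j ≤ k ∧ ∃ fs : List c00, fs ≠ [] ∧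
      fs.length ≤ 4 * P.n j ∧ (∀ g ∈ fs, g ∈ WFk P k N) ∧ fs.Chain' blockLt ∧
      f = ((P.m j : ℝ))⁻¹ • fs.sum}

/-- The norming set `W^{(k)}` of `X_{u,k}`. -/
def Wk (P : Params) (k : ℕ) : Set c00 := ⋃ N, WFk P k N

/-- `f ∈ W` has weight `w(f) = m_j`. -/
def WHasWeight (P : Params) (f : c00) (w : ℕ) : Prop :=
  ∃ j, 1 ≤ j ∧ w = P.m j ∧ ∃ fs : List c00, fs ≠ [] ∧ fs.length ≤ 4 * P.n j ∧
    (∀ g ∈ fs, g ∈ Wset P) ∧ fs.Chain' blockLt ∧ f = ((P.m j : ℝ))⁻¹ • fs.sum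

/-- `f` admits a tree in `W` all of whose non-terminal nodes have weight `≠ w0`. -/
inductive WTreeAvoid (P : Params) (w0 : ℕ) : c00 → Prop
  | leaf (f : c00) (hf : f ∈ K0set ∪ {0}) : WTreeAvoid P w0 f
  | node (j : ℕ) (hj : 1 ≤ j) (hw : P.m j ≠ w0) (fs : List c00) (hne : fs ≠ [])
      (hlen : fs.length ≤ 4 * P.n j) (hch : fs.Chain' blockLt)
      (hmem : ∀ g ∈ fs, WTreeAvoid P w0 g) :
      WTreeAvoid P w0 (((P.m j : ℝ))⁻¹ • fs.sum)

/-- `q_j = 1/log_{4n_j}(m_j) = log (4 n_j) / log (m_j)`. -/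
def qexp (P : Params) (j : ℕ) : ℝ := Real.log (4 * (P.n j : ℝ)) / Real.log (P.m j : ℝ)

/-- `p_j = 1/(1 - log_{4n_j}(m_j))`, the conjugate exponent of `q_j`. -/
def pexp (P : Params) (j : ℕ) : ℝ :=
  1 / (1 - Real.log (P.m j : ℝ) / Real.log (4 * (P.n j : ℝ)))

/-- `x` is a `C`-`ℓ_1^k` average. -/
def IsL1Avg (P : Params) (C : Coding P) (Cc : ℝ) (k : ℕ) (x : c00) : Prop :=
  ∃ xs : ℕ → c00, (∀ i, i + 1 < k → blockLt (xs i) (xs (i + 1))) ∧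
    (∀ i < k, normK P C (xs i) ≤ Cc * normK P C x) ∧
    x = ((k : ℝ))⁻¹ • ∑ i ∈ Finset.range k, xs i

/-- `(x_k)_{k<N}` is a `(C,ε)`-rapidly increasing sequence. -/
def IsRIS (P : Params) (C : Coding P) (Cc ε : ℝ) (N : ℕ) (x : ℕ → c00) : Prop :=
  (∀ k, k + 1 < N → blockLt (x k) (x (k + 1))) ∧
  ∃ jk : ℕ → ℕ, StrictMono jk ∧ (∀ k, 1 ≤ jk k) ∧
    ∀ k < N, normK P C (x k) ≤ Cc ∧
      ((rangeI (x k)).card : ℝ) / (P.m (jk (k + 1)) : ℝ) < ε ∧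
      ∀ f ∈ Kset P C, ∀ w, KHasWeight P C f w → (w : ℝ) < (P.m (jk k) : ℝ) →
        |dot f (x k)| ≤ Cc / (w : ℝ)

/-- `(x_k)_{k<N}` is a `(C,ε)`-rapidly increasing sequence of `ℓ_1` averages. -/
def IsRISofAvgs (P : Params) (C : Coding P) (Cc ε : ℝ) (N : ℕ) (x : ℕ → c00) : Prop :=
  (∀ k, k + 1 < N → blockLt (x k) (x (k + 1))) ∧
  ∃ jk : ℕ → ℕ, StrictMono jk ∧ (∀ k, 1 ≤ jk k) ∧
    ∀ k < N, normK P C (x k) = 1 ∧ IsL1Avg P C (2 * Cc / 3) (P.n (jk k)) (x k) ∧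
      ((rangeI (x k)).card : ℝ) / (P.m (jk (k + 1)) : ℝ) < ε

/-- `χ` is a depended sequence of length `n_{2j+1}`. -/
def IsDependedSeq (P : Params) (C : Coding P) (j : ℕ) (χ : List (c00 × c00)) : Prop :=
  χ.length = P.n (2 * j + 1) ∧
  ∃ φ : List (c00 × c00), IsSpecialSeq P C φ ∧ φ.length = P.n (2 * j + 1) ∧
    (∀ i, 1 ≤ i → i ≤ P.n (2 * j + 1) → fC χ i = fC φ i) ∧
    (∀ i, 1 ≤ i → 2 * i - 1 ≤ P.n (2 * j + 1) → xC χ (2 * i - 1) = xC φ (2 * i - 1)) ∧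
    (∀ i, 1 ≤ i → 2 * i ≤ P.n (2 * j + 1) →
      (xC φ (2 * i)).support = (xC χ (2 * i)).support ∧
      normK P C (xC φ (2 * i) - xC χ (2 * i)) ≤
        1 / (P.n (C.σ (pref φ (2 * i - 1))) : ℝ) ^ 2 ∧
      (∃ c : ℝ, 0 < c ∧ c < 1 ∧ ∃ xs : ℕ → c00,
        IsRISofAvgs P C 3 (1 / (P.n (C.σ (pref φ (2 * i - 1))) : ℝ))
          (P.n (C.σ (pref φ (2 * i - 1)))) xs ∧
        xC χ (2 * i) = (c / (P.n (C.σ (pref φ (2 * i - 1))) : ℝ)) •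
          ∑ l ∈ Finset.range (P.n (C.σ (pref φ (2 * i - 1)))), xs l) ∧
      1 / (12 * (P.m (C.σ (pref φ (2 * i - 1))) : ℝ)) ≤
        dot (fC χ (2 * i)) (xC χ (2 * i)))

/-- The canonical map `c00 → X` sending `x` to `∑ k, x k • e' k`. -/
def lift {X : Type*} [AddCommGroup X] [Module ℝ X] (e' : ℕ → X) (x : c00) : X :=
  x.sum fun k a => a • e' k

/-- `X`, together with the sequence `e'`, is a realization of the space `X_ius`:
the completion of `c00` under `‖·‖_K`, with `e'` the natural basis. -/
structure IsIusRep (P : Params) (C : Coding P) {X : Type*} [NormedAddCommGroup X]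
    [NormedSpace ℝ X] (e' : ℕ → X) : Prop where
  norm_eq : ∀ x : c00, ‖lift e' x‖ = normK P C x
  dense : DenseRange (lift e')

/-- A bounded operator `S` is strictly singular: its restriction to no
infinite-dimensional closed subspace is an isomorphism onto its image
(i.e. it is bounded below on no such subspace). -/
def StrictlySingular {X : Type*} [NormedAddCommGroup X] [NormedSpace ℝ X]
    (S : X →L[ℝ] X) : Prop :=
  ∀ Y : Submodule ℝ X, IsClosed (Y : Set X) → ¬ FiniteDimensional ℝ Y →
    ¬ ∃ c : ℝ, 0 < c ∧ ∀ y ∈ Y, c * ‖y‖ ≤ ‖S y‖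

end Ius
namespace Ius

/-- The data of a node of type (b) (a special functional node) in the analysis of an
element of `K`: the special sequence `φ`, the sign `ε`, the interval `E`, the
functionals `f'_{2i}` and the coefficients `λ_{f'_{2i}}`. -/
structure BNode where
  j : ℕ
  φ : List (c00 × c00)
  eps : ℝ
  E : Set ℕ
  f' : ℕ → c00
  lam : ℕ → ℝ

/-- The pieces of a (b)-node: `(i, true)` is `E f_{2i-1}` and `(i, false)` is `E f'_{2i}`. -/
def BNode.piece (D : BNode) (p : ℕ × Bool) : c00 :=
  if p.2 then restrictTo D.E (fC D.φ (2 * p.1 - 1)) else restrictTo D.E (D.f' p.1)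

open Classical in
/-- The positions (in support order) of the nonzero pieces of a (b)-node. -/
noncomputable def BNode.posList (P : Params) (D : BNode) : List (ℕ × Bool) :=
  (((List.range (P.n (2 * D.j + 1) / 2)).map fun i =>
    [((i + 1 : ℕ), true), ((i + 1 : ℕ), false)]).flatten).filter
      fun p => decide (D.piece p ≠ 0)

/-- The value of a (b)-node:
`(ε/m_{2j+1}) E(λ_{f'_2} f_1 + f'_2 + ⋯ + λ_{f'_{n_{2j+1}}} f_{n_{2j+1}-1} + f'_{n_{2j+1}})`. -/
noncomputable def BNode.value (P : Params) (D : BNode) : c00 :=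
  (D.eps * ((P.m (2 * D.j + 1) : ℝ))⁻¹) •
    restrictTo D.E (∑ i ∈ Finset.Icc 1 (P.n (2 * D.j + 1) / 2),
      (D.lam i • fC D.φ (2 * i - 1) + D.f' i))

/-- Validity of a (b)-node: its value belongs to `K_φ`. -/
def BNode.Valid (P : Params) (C : Coding P) (D : BNode) : Prop :=
  1 ≤ D.j ∧ (D.eps = 1 ∨ D.eps = -1) ∧ IsInterval D.E ∧
  ∃ N, SpecialAdm P C (KF P C N) D.j D.φ ∧
    ∀ i, 1 ≤ i → 2 * i ≤ P.n (2 * D.j + 1) →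
      D.f' i ∈ KF P C N (C.σ (pref D.φ (2 * i - 1))) ∧
      (D.f' i).support = (fC D.φ (2 * i)).support ∧
      (∀ g ∈ KF P C N (C.σ (pref D.φ (2 * i - 1))),
        |dot g (xC D.φ (2 * i))| ≤ ((P.m (C.σ (pref D.φ (2 * i - 1))) : ℝ))⁻¹) ∧
      lamCond P C D.j D.φ D.f' D.lam i

open Classical in
/-- The number of immediate successors of the node `α` in the index tree `A`. -/
noncomputable def deg (A : Finset (List ℕ)) (α : List ℕ) : ℕ :=
  (A.filter fun β => ∃ i, β = α ++ [i]).card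

/-- A tree `(f_α)_{α ∈ A}` of a functional of `K`: a finite family indexed by a finite
rooted tree `A` (addresses are lists of child indices; the root is `[]`), whose
terminal nodes carry elements of `K_0` and whose non-terminal nodes are obtained
either by an `(A_{n_{2j}}, 1/m_{2j})` operation (case (a), `B α = none`) or from a
special sequence (case (b), `B α = some D`), the children being the nonzero pieces
in their support order. -/
structure KTree (P : Params) (C : Coding P) where
  A : Finset (List ℕ)
  F : List ℕ → c00
  B : List ℕ → Option BNode
  root_mem : [] ∈ A
  downward : ∀ (α : List ℕ) (i : ℕ), α ++ [i] ∈ A → α ∈ A ∧ ∀ i' < i, α ++ [i'] ∈ A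
  mem : ∀ α ∈ A, F α ∈ Kset P C
  leaf : ∀ α ∈ A, α ++ [0] ∉ A → F α ∈ K0set
  nodeA : ∀ α ∈ A, α ++ [0] ∈ A → B α = none →
    ∃ j, 1 ≤ j ∧ deg A α ≤ P.n (2 * j) ∧
      (((List.range (deg A α)).map fun i => F (α ++ [i])).Chain' blockLt) ∧
      F α = ((P.m (2 * j) : ℝ))⁻¹ • ∑ i ∈ Finset.range (deg A α), F (α ++ [i])
  nodeB : ∀ α ∈ A, ∀ D, B α = some D → α ++ [0] ∈ A ∧ BNode.Valid P C D ∧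
    F α = BNode.value P D ∧
    ((List.range (deg A α)).map fun i => F (α ++ [i])) =
      (BNode.posList P D).map D.piece

/-- The children `β ++ [r]`, `β ++ [r+1]` form a depended couple with respect to the
root functional: they are `E f_{2i-1}` and `E f'_{2i}` of a (b)-node `β`. -/
def IsDepCoupleIdx (P : Params) (C : Coding P) (T : KTree P C) (β : List ℕ) (r : ℕ) :
    Prop :=
  β ∈ T.A ∧ ∃ D, T.B β = some D ∧ ∃ i,
    (BNode.posList P D)[r]? = some (i, true) ∧
    (BNode.posList P D)[r + 1]? = some (i, false)

/-- `α ∈ F_{f,x_k}`: the couple `(f_α, f_{α^+})` is a depended couple with respect to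
the root functional and `x_k`. -/
def InFF (P : Params) (C : Coding P) (T : KTree P C) (x : ℕ → c00) (k : ℕ)
    (α : List ℕ) : Prop :=
  ∃ β r, α = β ++ [r] ∧ α ∈ T.A ∧ β ++ [r + 1] ∈ T.A ∧ IsDepCoupleIdx P C T β r ∧
    (k = 0 ∨ maxSupp (x (k - 1)) < minSupp (T.F α)) ∧
    minSupp (T.F α) ≤ maxSupp (x k) ∧
    minSupp (x (k + 1)) ≤ maxSupp (T.F (β ++ [r + 1]))

/-- `F_f = ⋃_k F_{f,x_k}`. -/
def FFall (P : Params) (C : Coding P) (T : KTree P C) (x : ℕ → c00) : Set (List ℕ) :=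
  {α | ∃ k, InFF P C T x k α}

/-- `y_k`: the restriction of `x_k` to `⋃_{α ∈ F_f} supp f_α`. -/
noncomputable def yRes (P : Params) (C : Coding P) (T : KTree P C) (x : ℕ → c00)
    (k : ℕ) : c00 :=
  restrictTo (⋃ α ∈ FFall P C T x, ((T.F α).support : Set ℕ)) (x k)


namespace Aux

/-! ### Basic parameter and vector lemmas -/

lemma two_le_m (P : Params) : ∀ j, 1 ≤ j → 2 ≤ P.m j := by
  intro j hj
  induction j with
  | zero => omega
  | succ n ih =>
    rcases Nat.eq_or_lt_of_le hj with h | h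
    · simpa [← h] using P.m_one.ge.trans (by omega)
    · have hn : 1 ≤ n := by omega
      have := ih hn
      rw [P.m_rec n hn]
      calc (2:ℕ) ≤ P.m n := this
        _ ≤ P.m n ^ 5 := Nat.le_self_pow (by omega) _

lemma one_le_n (P : Params) : ∀ j, 1 ≤ j → 1 ≤ P.n j := by
  intro j hj
  induction j with
  | zero => omega
  | succ n ih =>
    rcases Nat.eq_or_lt_of_le hj with h | h
    · have hn0 : n = 0 := by omega
      subst hn0
      show 1 ≤ P.n 1
      rw [P.n_one]; omega
    · have hn : 1 ≤ n := by omega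
      rw [P.n_rec n hn]
      exact Nat.one_le_iff_ne_zero.mpr (pow_ne_zero _ (by have := ih hn; omega))

lemma e_apply (k t : ℕ) : e k t = if k = t then 1 else 0 := by
  simp [e, Finsupp.single_apply]

lemma e_ne_zero (k : ℕ) : e k ≠ 0 := by
  intro h
  have := congrArg (fun z : c00 => z k) h
  simp [e_apply] at this

lemma restrictTo_apply (E : Set ℕ) (x : c00) (t : ℕ) :
    restrictTo E x t = if t ∈ E then x t else 0 := by
  classical
  simp [restrictTo, Finsupp.filter_apply]

lemma mem_support_restrictTo {E : Set ℕ} {x : c00} {t : ℕ} :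
    t ∈ (restrictTo E x).support ↔ t ∈ E ∧ t ∈ x.support := by
  classical
  simp only [Finsupp.mem_support_iff, restrictTo_apply]
  by_cases h : t ∈ E <;> simp [h]

lemma dot_eq_sum (f x : c00) : dot f x = ∑ t ∈ x.support, f t * x t := rfl

lemma dot_eq_sum_subset (f x : c00) {S : Finset ℕ} (h : x.support ⊆ S) :
    dot f x = ∑ t ∈ S, f t * x t := by
  rw [dot_eq_sum]
  refine Finset.sum_subset h ?_
  intro t _ ht
  simp [Finsupp.notMem_support_iff.mp ht]

lemma dot_neg (f x : c00) : dot (-f) x = - dot f x := by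
  simp only [dot_eq_sum, Finsupp.coe_neg, Pi.neg_apply, neg_mul, Finset.sum_neg_distrib]

lemma dot_smul (f x : c00) (c : ℝ) : dot f (c • x) = c * dot f x := by
  have hs : (c • x).support ⊆ x.support := Finsupp.support_smul
  rw [dot_eq_sum_subset f (c • x) hs, dot_eq_sum, Finset.mul_sum]
  refine Finset.sum_congr rfl fun t _ => ?_
  simp [Finsupp.smul_apply]
  ring

/-! ### minSupp / maxSupp -/

lemma supp_ne {z : c00} (h : z ≠ 0) : z.support.Nonempty :=
  Finsupp.support_nonempty_iff.mpr h

lemma minSupp_eq {z : c00} (hne : z.support.Nonempty) : minSupp z = z.support.min' hne := by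
  rw [minSupp, ← Finset.coe_min' hne, WithTop.untopD_coe]

lemma maxSupp_eq {z : c00} (hne : z.support.Nonempty) : maxSupp z = z.support.max' hne := by
  rw [maxSupp, ← Finset.coe_max' hne, WithBot.unbotD_coe]

lemma minSupp_mem {z : c00} (h : z ≠ 0) : minSupp z ∈ z.support := by
  rw [minSupp_eq (supp_ne h)]; exact Finset.min'_mem _ _

lemma maxSupp_mem {z : c00} (h : z ≠ 0) : maxSupp z ∈ z.support := by
  rw [maxSupp_eq (supp_ne h)]; exact Finset.max'_mem _ _

lemma minSupp_le {z : c00} {t : ℕ} (ht : t ∈ z.support) : minSupp z ≤ t := by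
  rw [minSupp_eq ⟨t, ht⟩]; exact Finset.min'_le _ _ ht

lemma le_maxSupp {z : c00} {t : ℕ} (ht : t ∈ z.support) : t ≤ maxSupp z := by
  rw [maxSupp_eq ⟨t, ht⟩]; exact Finset.le_max' _ _ ht

/-! ### blockLt and chains -/

lemma blockLt_not_mem {a b : c00} (h : blockLt a b) {t : ℕ}
    (hta : t ∈ a.support) (htb : t ∈ b.support) : False :=
  lt_irrefl t (h t hta t htb)

lemma blockLt_asymm {a b : c00} (ha : a ≠ 0) (hb : b ≠ 0)
    (h : blockLt a b) (h' : blockLt b a) : False := by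
  obtain ⟨t, ht⟩ := supp_ne ha
  obtain ⟨s, hs⟩ := supp_ne hb
  have h1 := h t ht s hs
  have h2 := h' s hs t ht
  omega

lemma chain'_pairwise {X : Type*} {R : X → X → Prop} :
    ∀ (l : List X), l.Chain' R →
      (∀ a ∈ l, ∀ b ∈ l, ∀ c ∈ l, R a b → R b c → R a c) → l.Pairwise R
  | [], _, _ => List.Pairwise.nil
  | [a], _, _ => by simp
  | a :: b :: t, h, htr => by
    obtain ⟨hab, h'⟩ := List.isChain_cons_cons.mp h
    have IH := chain'_pairwise (b :: t) h'
      (fun p hp q hq r hr => htr p (by simp [List.mem_cons] at hp ⊢; tauto)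
        q (by simp [List.mem_cons] at hq ⊢; tauto) r (by simp [List.mem_cons] at hr ⊢; tauto))
    refine List.Pairwise.cons ?_ IH
    intro c hc
    rcases List.mem_cons.mp hc with rfl | hc
    · exact hab
    · exact htr a (by simp) b (by simp) c (by simp [hc]) hab
        ((List.pairwise_cons.mp IH).1 c hc)

/-! ### Ktilde lemmas -/

lemma sum_se_apply (F : Finset ℕ) (s : ℕ → ℝ) (t : ℕ) :
    (∑ l ∈ F, s l • e l) t = if t ∈ F then s t else 0 := by
  classical
  rw [Finsupp.finset_sum_apply]
  have h1 : ∀ l ∈ F, (s l • e l) t = if l = t then s l else 0 := by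
    intro l _
    rw [Finsupp.smul_apply, e_apply, smul_eq_mul]
    split <;> simp
  rw [Finset.sum_congr rfl h1]
  exact Finset.sum_ite_eq' F t s

lemma ktilde_pointwise (P : Params) {g : c00} (hg : g ∈ Ktilde P) (t : ℕ) : |g t| ≤ 1 := by
  rcases hg with (hg | hg) | hg
  · obtain ⟨k, hk | hk⟩ := hg <;> subst hk <;>
      simp [e_apply, Finsupp.neg_apply] <;> split <;> simp
  · obtain ⟨j, hj, F, hF, s, hs, rfl⟩ := hg
    rw [Finsupp.smul_apply, sum_se_apply]
    have hm : (2:ℝ) ≤ (P.m (2 * j) : ℝ) := by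
      exact_mod_cast two_le_m P (2 * j) (by omega)
    have hm0 : (0:ℝ) < (P.m (2 * j) : ℝ) := by linarith
    have h1 : |((P.m (2 * j) : ℝ))⁻¹| ≤ 1 := by
      rw [abs_of_nonneg (by positivity)]
      rw [inv_le_one_iff₀]; right; linarith
    calc |((P.m (2*j):ℝ))⁻¹ • (if t ∈ F then s t else 0)|
        = |((P.m (2*j):ℝ))⁻¹| * |if t ∈ F then s t else 0| := by
          rw [smul_eq_mul, abs_mul]
      _ ≤ 1 * 1 := by
          refine mul_le_mul h1 ?_ (abs_nonneg _) zero_le_one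
          split
          · rcases hs t with h | h <;> simp [h]
          · simp
      _ = 1 := by ring
  · simp only [Set.mem_singleton_iff] at hg
    subst hg; simp

lemma bddAbove_kt (P : Params) (z : c00) :
    BddAbove ((fun f => dot f z) '' Ktilde P) := by
  refine ⟨∑ t ∈ z.support, |z t|, ?_⟩
  rintro b ⟨g, hg, rfl⟩
  calc dot g z = ∑ t ∈ z.support, g t * z t := dot_eq_sum g z
    _ ≤ ∑ t ∈ z.support, |z t| := by
        refine Finset.sum_le_sum fun t _ => ?_
        calc g t * z t ≤ |g t * z t| := le_abs_self _
          _ = |g t| * |z t| := abs_mul _ _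
          _ ≤ 1 * |z t| := by
              refine mul_le_mul_of_nonneg_right (ktilde_pointwise P hg t) (abs_nonneg _)
          _ = |z t| := one_mul _

lemma zero_mem_ktilde (P : Params) : (0 : c00) ∈ Ktilde P := by
  right; rfl

lemma dot_le_normKt (P : Params) {g : c00} (hg : g ∈ Ktilde P) (z : c00) :
    dot g z ≤ normKt P z :=
  le_csSup (bddAbove_kt P z) ⟨g, hg, rfl⟩

lemma normKt_nonneg (P : Params) (z : c00) : 0 ≤ normKt P z := by
  have := dot_le_normKt P (zero_mem_ktilde P) z
  have h0 : dot (0 : c00) z = 0 := by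
    simp [dot_eq_sum, Finsupp.coe_zero]
  linarith

lemma tform_mem_ktilde (P : Params) {w : ℕ} {F : Finset ℕ} (s : ℕ → ℝ)
    (hw : 1 ≤ w) (hF : F.card ≤ P.n (2 * w)) (hs : ∀ i, s i = 1 ∨ s i = -1) :
    ((P.m (2 * w) : ℝ))⁻¹ • ∑ l ∈ F, s l • e l ∈ Ktilde P := by
  left; right
  exact ⟨w, hw, F, hF, s, hs, rfl⟩

lemma abs_dot_tform_le (P : Params) {w : ℕ} {F : Finset ℕ}
    (hw : 1 ≤ w) (hF : F.card ≤ P.n (2 * w)) (z : c00) :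
    |dot (((P.m (2 * w) : ℝ))⁻¹ • ∑ l ∈ F, e l) z| ≤ normKt P z := by
  have h1 : ((P.m (2 * w) : ℝ))⁻¹ • ∑ l ∈ F, e l
      = ((P.m (2 * w) : ℝ))⁻¹ • ∑ l ∈ F, (fun _ => (1:ℝ)) l • e l := by
    simp
  have hpos : dot (((P.m (2 * w) : ℝ))⁻¹ • ∑ l ∈ F, e l) z ≤ normKt P z := by
    rw [h1]
    exact dot_le_normKt P (tform_mem_ktilde P _ hw hF (fun _ => Or.inl rfl)) z
  have hneg : -(dot (((P.m (2 * w) : ℝ))⁻¹ • ∑ l ∈ F, e l) z) ≤ normKt P z := by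
    rw [← dot_neg]
    have h2 : -(((P.m (2 * w) : ℝ))⁻¹ • ∑ l ∈ F, e l)
        = ((P.m (2 * w) : ℝ))⁻¹ • ∑ l ∈ F, (fun _ => (-1:ℝ)) l • e l := by
      rw [← smul_neg]
      congr 1
      rw [← Finset.sum_neg_distrib]
      exact Finset.sum_congr rfl fun l _ => by simp
    rw [h2]
    exact dot_le_normKt P (tform_mem_ktilde P _ hw hF (fun _ => Or.inr rfl)) z
  exact abs_le.mpr ⟨by linarith, hpos⟩

lemma dot_restrict_swap (g : c00) (E : Set ℕ) (z : c00) :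
    dot g (restrictTo E z) = dot (restrictTo E g) z := by
  classical
  have hs : (restrictTo E z).support ⊆ z.support := fun t ht =>
    (mem_support_restrictTo.mp ht).2
  rw [dot_eq_sum_subset g (restrictTo E z) hs, dot_eq_sum]
  refine Finset.sum_congr rfl fun t _ => ?_
  rw [restrictTo_apply, restrictTo_apply]
  split <;> simp

lemma restrict_mem_ktilde (P : Params) {g : c00} (hg : g ∈ Ktilde P) (E : Set ℕ) :
    restrictTo E g ∈ Ktilde P := by
  classical
  rcases hg with (hg | hg) | hg
  · obtain ⟨k, hk | hk⟩ := hg <;> subst hk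
    · by_cases hkE : k ∈ E
      · left; left
        refine ⟨k, Or.inl ?_⟩
        ext t
        rw [restrictTo_apply]
        by_cases ht : t ∈ E
        · simp [ht]
        · have hkt : k ≠ t := fun h => ht (h ▸ hkE)
          simp [ht, e_apply, hkt]
      · right
        ext t
        rw [restrictTo_apply]
        by_cases ht : t ∈ E
        · have hkt : k ≠ t := fun h => hkE (h ▸ ht)
          simp [ht, e_apply, hkt]
        · simp [ht]
    · by_cases hkE : k ∈ E
      · left; left
        refine ⟨k, Or.inr ?_⟩
        ext t
        rw [restrictTo_apply]
        by_cases ht : t ∈ E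
        · simp [ht]
        · have hkt : k ≠ t := fun h => ht (h ▸ hkE)
          simp [ht, e_apply, Finsupp.neg_apply, hkt]
      · right
        ext t
        rw [restrictTo_apply]
        by_cases ht : t ∈ E
        · have hkt : k ≠ t := fun h => hkE (h ▸ ht)
          simp [ht, e_apply, Finsupp.neg_apply, hkt]
        · simp [ht]
  · obtain ⟨j, hj, F, hF, s, hs, rfl⟩ := hg
    left; right
    refine ⟨j, hj, F.filter (fun i => i ∈ E), le_trans (Finset.card_filter_le _ _) hF,
      s, hs, ?_⟩
    ext t
    rw [restrictTo_apply]
    rw [Finsupp.smul_apply, Finsupp.smul_apply, sum_se_apply, sum_se_apply]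
    by_cases ht : t ∈ E <;> by_cases htF : t ∈ F <;>
      simp [ht, htF, Finset.mem_filter]
  · simp only [Set.mem_singleton_iff] at hg
    subst hg
    right
    ext t
    rw [restrictTo_apply]
    split <;> simp

lemma normKt_restrict_le (P : Params) (E : Set ℕ) (z : c00) :
    normKt P (restrictTo E z) ≤ normKt P z := by
  refine Real.sSup_le ?_ (normKt_nonneg P z)
  rintro b ⟨g, hg, rfl⟩
  show dot g (restrictTo E z) ≤ normKt P z
  rw [dot_restrict_swap]
  exact dot_le_normKt P (restrict_mem_ktilde P hg E) z

end Aux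

/-! ### Tree index basics -/

section Tree

variable {P : Params} {C : Coding P} (T : KTree P C)

lemma append_singleton_injective (α : List ℕ) :
    Function.Injective (fun i : ℕ => α ++ [i]) := by
  intro a b h
  simp only [List.append_cancel_left_eq, List.cons.injEq] at h
  exact h.1

lemma mem_child_lt_deg {α : List ℕ} {i : ℕ} (hi : α ++ [i] ∈ T.A) : i < deg T.A α := by
  classical
  have hsub : (Finset.range (i+1)).image (fun i' => α ++ [i'])
      ⊆ T.A.filter (fun β => ∃ i, β = α ++ [i]) := by
    intro β hβ
    simp only [Finset.mem_image, Finset.mem_range] at hβ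
    obtain ⟨i', hi', rfl⟩ := hβ
    refine Finset.mem_filter.mpr ⟨?_, ⟨i', rfl⟩⟩
    rcases Nat.lt_succ_iff_lt_or_eq.mp hi' with h | h
    · exact (T.downward α i hi).2 i' h
    · subst h; exact hi
  have hcard := Finset.card_le_card hsub
  rw [Finset.card_image_of_injective _ (append_singleton_injective α),
    Finset.card_range] at hcard
  have : (T.A.filter (fun β => ∃ i, β = α ++ [i])).card = deg T.A α := by
    unfold deg; congr 1
  omega

lemma child_mem_of_lt_deg {α : List ℕ} {i : ℕ} (hi : i < deg T.A α) :
    α ++ [i] ∈ T.A := by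
  classical
  by_contra hnot
  have hsub : T.A.filter (fun β => ∃ i, β = α ++ [i])
      ⊆ (Finset.range i).image (fun i' => α ++ [i']) := by
    intro β hβ
    obtain ⟨hβA, i', rfl⟩ := Finset.mem_filter.mp hβ
    simp only [Finset.mem_image, Finset.mem_range]
    refine ⟨i', ?_, rfl⟩
    rcases lt_trichotomy i' i with h | h | h
    · exact h
    · subst h; exact absurd hβA hnot
    · exact absurd ((T.downward α i' hβA).2 i h) hnot
  have hcard := Finset.card_le_card hsub
  rw [Finset.card_image_of_injective _ (append_singleton_injective α),
    Finset.card_range] at hcard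
  have : (T.A.filter (fun β => ∃ i, β = α ++ [i])).card = deg T.A α := by
    unfold deg; congr 1
  omega

lemma mem_of_prefix : ∀ (ρ δ : List ℕ), δ ++ ρ ∈ T.A → δ ∈ T.A := by
  intro ρ
  induction ρ using List.reverseRecOn with
  | nil => intro δ h; simpa using h
  | append_singleton ρ' i ih =>
    intro δ h
    rw [← List.append_assoc] at h
    exact ih δ (T.downward (δ ++ ρ') i h).1

lemma mem_of_isPrefix {δ α : List ℕ} (h : δ <+: α) (hα : α ∈ T.A) : δ ∈ T.A := by
  obtain ⟨ρ, rfl⟩ := h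
  exact mem_of_prefix T ρ δ hα

/-! ### QsSet facts -/

lemma qset_union_nonempty {p : c00 × c00} (hp : p.1 ∈ Qset ∧ p.2 ∈ Qset) :
    (p.1.support ∪ p.2.support).Nonempty := by
  obtain ⟨t, ht⟩ := Aux.supp_ne hp.1.1
  exact ⟨t, Finset.mem_union_left _ ht⟩

lemma qs_get_pairwise {φ : List (c00 × c00)} (hφ : φ ∈ QsSet) {a b : ℕ}
    (hab : a < b) (hb : b < φ.length) :
    suppLt ((φ.get ⟨a, by omega⟩).1.support ∪ (φ.get ⟨a, by omega⟩).2.support)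
      ((φ.get ⟨b, hb⟩).1.support ∪ (φ.get ⟨b, hb⟩).2.support) := by
  obtain ⟨hne, hmem, hch⟩ := hφ
  have hpw := Aux.chain'_pairwise φ hch ?_
  · exact List.pairwise_iff_get.mp hpw ⟨a, by omega⟩ ⟨b, hb⟩ hab
  · intro p hp q hq r hr hpq hqr
    intro s hs t ht
    obtain ⟨u, hu⟩ := qset_union_nonempty (hmem q hq)
    exact lt_trans (hpq s hs u hu) (hqr u hu t ht)

lemma fC_suppLt {φ : List (c00 × c00)} (hφ : φ ∈ QsSet) {a b : ℕ}
    (ha : 1 ≤ a) (hab : a < b) (hb : b ≤ φ.length) :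
    ∀ s ∈ (fC φ a).support, ∀ t ∈ (fC φ b).support, s < t := by
  intro s hs t ht
  have ha' : a - 1 < φ.length := by omega
  have hb' : b - 1 < φ.length := by omega
  have h1 : fC φ a = (φ.get ⟨a - 1, ha'⟩).2 := by
    rw [fC, List.getD_eq_getElem φ (0,0) ha']
    rfl
  have h2 : fC φ b = (φ.get ⟨b - 1, hb'⟩).2 := by
    rw [fC, List.getD_eq_getElem φ (0,0) hb']
    rfl
  have := qs_get_pairwise hφ (by omega : a - 1 < b - 1) hb'
  refine this s ?_ t ?_
  · rw [h1] at hs; exact Finset.mem_union_right _ hs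
  · rw [h2] at ht; exact Finset.mem_union_right _ ht

lemma pref_mem_qs {φ : List (c00 × c00)} (hφ : φ ∈ QsSet) {t : ℕ}
    (ht1 : 1 ≤ t) (ht : t ≤ φ.length) : pref φ t ∈ QsSet := by
  obtain ⟨hne, hmem, hch⟩ := hφ
  refine ⟨?_, ?_, ?_⟩
  · have : (φ.take t).length = t := by
      rw [List.length_take]; omega
    intro h
    rw [pref] at h
    rw [h] at this
    simp at this; omega
  · intro p hp
    exact hmem p (List.mem_of_mem_take hp)
  · exact hch.take t

lemma sigma_even_pos {φ : List (c00 × c00)} {P : Params} {C : Coding P}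
    (hQ : φ ∈ QsSet) : ∃ k, 1 ≤ k ∧ C.σ φ = 2 * k := C.even_pos φ hQ

lemma two_le_m_sigma {φ : List (c00 × c00)} {C : Coding P}
    (hQ : φ ∈ QsSet) : 2 ≤ P.m (C.σ φ) := by
  obtain ⟨k, hk, heq⟩ := C.even_pos φ hQ
  rw [heq]
  exact Aux.two_le_m P (2 * k) (by omega)

end Tree

/-! ### (b)-node analysis -/

namespace BFacts

variable {P : Params} {C : Coding P}

/-- index of a piece among the functionals of `φ` -/
def pidx (p : ℕ × Bool) : ℕ := if p.2 then 2 * p.1 - 1 else 2 * p.1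

lemma sum_e_apply (F : Finset ℕ) (t : ℕ) :
    (∑ l ∈ F, e l) t = if t ∈ F then 1 else 0 := by
  have := Aux.sum_se_apply F (fun _ => 1) t
  simpa using this

lemma restrict_tform (E : Set ℕ) (c : ℝ) (F : Finset ℕ) :
    restrictTo E (c • ∑ l ∈ F, e l)
      = c • ∑ l ∈ F.filter (fun l => l ∈ E), e l := by
  classical
  ext t
  rw [Aux.restrictTo_apply, Finsupp.smul_apply, Finsupp.smul_apply,
    sum_e_apply, sum_e_apply]
  by_cases ht : t ∈ E <;> by_cases htF : t ∈ F <;>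
    simp [ht, htF, Finset.mem_filter]

variable {D : BNode}

lemma valid_unpack (hv : D.Valid P C) :
    D.φ ∈ QsSet ∧ D.φ.length = P.n (2 * D.j + 1) := by
  obtain ⟨hj, hε, hE, N, hadm, hcl⟩ := hv
  obtain ⟨⟨hQs, _⟩, hlen, _⟩ := hadm
  exact ⟨hQs, hlen⟩

lemma lam_facts (hv : D.Valid P C) {i : ℕ} (hi1 : 1 ≤ i)
    (hi2 : 2 * i ≤ P.n (2 * D.j + 1)) :
    D.lam i ≠ 0 ∧ |D.lam i| ≤ 1 := by
  obtain ⟨hj, hε, hE, N, hadm, hcl⟩ := hv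
  obtain ⟨hf'mem, hf'supp, hbound, hlamne, hlam0⟩ := hcl i hi1 hi2
  have hQφ : D.φ ∈ QsSet := hadm.1.1
  have hlenφ : D.φ.length = P.n (2 * D.j + 1) := hadm.2.1
  by_cases hd : dot (D.f' i) (xC D.φ (2 * i)) = 0
  · have hn1 : 1 ≤ P.n (2 * D.j + 1) := Aux.one_le_n P _ (by omega)
    have hn1' : (1:ℝ) ≤ (P.n (2 * D.j + 1) : ℝ) := by exact_mod_cast hn1
    rcases hlam0 hd with h | h <;> rw [h] <;> constructor
    · positivity
    · rw [abs_of_nonneg (by positivity)]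
      rw [div_le_one (by positivity)]
      nlinarith
    · simp only [ne_eq, neg_eq_zero]
      positivity
    · rw [abs_neg, abs_of_nonneg (by positivity)]
      rw [div_le_one (by positivity)]
      nlinarith
  · have hQp : pref D.φ (2 * i - 1) ∈ QsSet := by
      refine pref_mem_qs hQφ (by omega) (by omega)
    have hM2 : 2 ≤ P.m (C.σ (pref D.φ (2 * i - 1))) := two_le_m_sigma hQp
    set M : ℝ := (P.m (C.σ (pref D.φ (2 * i - 1))) : ℝ) with hMdef
    have hM2' : (2:ℝ) ≤ M := by rw [hMdef]; exact_mod_cast hM2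
    have hlam := hlamne hd
    rw [Aux.dot_smul] at hlam
    have hb := hbound (D.f' i) hf'mem
    constructor
    · rw [hlam]
      exact mul_ne_zero (by positivity) hd
    · rw [hlam, abs_mul, abs_of_nonneg (by positivity : (0:ℝ) ≤ M)]
      calc M * |dot (D.f' i) (xC D.φ (2 * i))| ≤ M * M⁻¹ := by
            exact mul_le_mul_of_nonneg_left hb (by positivity)
        _ ≤ 1 := by
            rw [mul_inv_cancel₀ (by positivity)]

lemma value_apply (t : ℕ) :
    BNode.value P D t
      = D.eps * ((P.m (2 * D.j + 1) : ℝ))⁻¹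
        * (if t ∈ D.E then
            ∑ i ∈ Finset.Icc 1 (P.n (2 * D.j + 1) / 2),
              (D.lam i * fC D.φ (2 * i - 1) t + D.f' i t)
          else 0) := by
  rw [BNode.value, Finsupp.smul_apply, Aux.restrictTo_apply]
  rw [smul_eq_mul]
  congr 1
  split
  · rw [Finsupp.finset_sum_apply]
    refine Finset.sum_congr rfl fun i _ => ?_
    rw [Finsupp.add_apply, Finsupp.smul_apply, smul_eq_mul]
  · rfl

lemma piece_supp_sub {p : ℕ × Bool} {t : ℕ} (hp1 : 1 ≤ p.1)
    (ht : t ∈ (D.piece p).support) :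
    t ∈ D.E ∧ t ∈ (fC D.φ (pidx p)).support ∨
      t ∈ D.E ∧ ¬ p.2 ∧ t ∈ (D.f' p.1).support := by
  rcases p with ⟨i, b⟩
  cases b
  · rw [BNode.piece] at ht
    simp only [if_neg Bool.false_ne_true] at ht
    have := Aux.mem_support_restrictTo.mp ht
    exact Or.inr ⟨this.1, by simp, this.2⟩
  · rw [BNode.piece] at ht
    simp only [if_pos rfl] at ht
    have := Aux.mem_support_restrictTo.mp ht
    exact Or.inl ⟨this.1, by simpa [pidx] using this.2⟩

lemma piece_blockLt (hv : D.Valid P C) {p q : ℕ × Bool}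
    (hp1 : 1 ≤ p.1) (hpK : 2 * p.1 ≤ P.n (2 * D.j + 1))
    (hq1 : 1 ≤ q.1) (hqK : 2 * q.1 ≤ P.n (2 * D.j + 1))
    (hpq : pidx p < pidx q) : blockLt (D.piece p) (D.piece q) := by
  obtain ⟨hQφ, hlenφ⟩ := valid_unpack hv
  obtain ⟨hj, hε, hE, N, hadm, hcl⟩ := hv
  intro s hs t ht
  -- the support of f' p.1 is that of fC φ (2 p.1)
  have hsupp' : ∀ i, 1 ≤ i → 2 * i ≤ P.n (2 * D.j + 1) →
      (D.f' i).support = (fC D.φ (2 * i)).support := fun i h1 h2 => (hcl i h1 h2).2.1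
  have hs' : s ∈ (fC D.φ (pidx p)).support := by
    rcases piece_supp_sub hp1 hs with ⟨_, h⟩ | ⟨_, hb, h⟩
    · exact h
    · rcases p with ⟨i, b⟩
      cases b
      · rw [hsupp' i hp1 hpK] at h
        simpa [pidx] using h
      · simp at hb
  have ht' : t ∈ (fC D.φ (pidx q)).support := by
    rcases piece_supp_sub hq1 ht with ⟨_, h⟩ | ⟨_, hb, h⟩
    · exact h
    · rcases q with ⟨i, b⟩
      cases b
      · rw [hsupp' i hq1 hqK] at h
        simpa [pidx] using h
      · simp at hb
  have h1 : 1 ≤ pidx p := by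
    rcases p with ⟨i, b⟩; cases b <;> simp [pidx] <;> omega
  have h2 : pidx q ≤ D.φ.length := by
    rw [hlenφ]
    rcases q with ⟨i, b⟩; cases b <;> simp [pidx] <;> omega
  exact fC_suppLt hQφ h1 hpq h2 s hs' t ht'

lemma posList_mem_facts {p : ℕ × Bool} (hp : p ∈ BNode.posList P D) :
    D.piece p ≠ 0 ∧ 1 ≤ p.1 ∧ 2 * p.1 ≤ P.n (2 * D.j + 1) := by
  rw [BNode.posList, List.mem_filter] at hp
  obtain ⟨hmem, hdec⟩ := hp
  have hne : D.piece p ≠ 0 := by simpa using hdec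
  simp only [List.mem_flatten, List.mem_map, List.mem_range] at hmem
  obtain ⟨l, ⟨i₀, hi₀, rfl⟩, hpl⟩ := hmem
  have h2 : 2 * (i₀ + 1) ≤ P.n (2 * D.j + 1) := by
    have := Nat.div_mul_le_self (P.n (2 * D.j + 1)) 2
    have h3 : i₀ + 1 ≤ P.n (2 * D.j + 1) / 2 := by omega
    calc 2 * (i₀ + 1) ≤ 2 * (P.n (2 * D.j + 1) / 2) := by omega
      _ ≤ P.n (2 * D.j + 1) := by
          rw [mul_comm]
          exact Nat.div_mul_le_self _ _
  rcases List.mem_cons.mp hpl with rfl | hpl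
  · exact ⟨hne, by omega, h2⟩
  · rcases List.mem_cons.mp hpl with rfl | hpl
    · exact ⟨hne, by omega, h2⟩
    · simp at hpl

lemma flat_pairwise_pidx :
    ((((List.range (P.n (2 * D.j + 1) / 2)).map fun i =>
      [((i + 1 : ℕ), true), ((i + 1 : ℕ), false)]).flatten).Pairwise
        fun p q => pidx p < pidx q) := by
  rw [List.pairwise_flatten]
  constructor
  · intro l' hl'
    simp only [List.mem_map, List.mem_range] at hl'
    obtain ⟨i₀, _, rfl⟩ := hl'
    refine List.pairwise_cons.mpr ⟨?_, by simp⟩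
    intro q hq
    rcases List.mem_cons.mp hq with rfl | hq
    · simp only [pidx]; norm_num
    · simp at hq
  · rw [List.pairwise_map]
    refine List.Pairwise.imp_of_mem ?_ List.pairwise_lt_range
    intro a b _ _ hab
    intro x hx y hy
    have hx' : pidx x ≤ 2 * (a + 1) := by
      rcases List.mem_cons.mp hx with rfl | hx
      · simp [pidx]
      · rcases List.mem_cons.mp hx with rfl | hx
        · simp [pidx]
        · simp at hx
    have hy' : 2 * (b + 1) - 1 ≤ pidx y := by
      rcases List.mem_cons.mp hy with rfl | hy
      · simp [pidx]
      · rcases List.mem_cons.mp hy with rfl | hy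
        · simp only [pidx]; norm_num
        · simp at hy
    omega

lemma posList_pairwise_pidx :
    (BNode.posList P D).Pairwise fun p q => pidx p < pidx q :=
  (flat_pairwise_pidx (P := P) (D := D)).sublist List.filter_sublist

lemma fC_disjoint {φ : List (c00 × c00)} (hQφ : φ ∈ QsSet) {a b t : ℕ}
    (ha : 1 ≤ a) (hb : 1 ≤ b) (hab : a ≠ b)
    (han : a ≤ φ.length) (hbn : b ≤ φ.length)
    (hta : t ∈ (fC φ a).support) (htb : t ∈ (fC φ b).support) : False := by
  rcases Nat.lt_or_ge a b with h | h
  · exact lt_irrefl t (fC_suppLt hQφ ha h hbn t hta t htb)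
  · have h' : b < a := by omega
    exact lt_irrefl t (fC_suppLt hQφ hb h' han t htb t hta)

lemma fC_odd_tform (hv : D.Valid P C) {i : ℕ} (hi1 : 1 ≤ i)
    (hi2 : 2 * i ≤ P.n (2 * D.j + 1)) :
    ∃ (w : ℕ) (F₀ : Finset ℕ), 1 ≤ w ∧ F₀.card ≤ P.n (2 * w) ∧
      fC D.φ (2 * i - 1) = ((P.m (2 * w) : ℝ))⁻¹ • ∑ l ∈ F₀, e l := by
  obtain ⟨hQφ, hlenφ⟩ := valid_unpack hv
  obtain ⟨hj, hε, hE, N, hadm, hcl⟩ := hv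
  obtain ⟨⟨_, kk, hkk1, hlen2k, hhead, hev, hodd⟩, hlen, _⟩ := hadm
  rcases Nat.eq_or_lt_of_le hi1 with h1 | h1
  · -- i = 1
    obtain ⟨j₀, hj₀1, _, F₀, hcard, _, hf⟩ := hhead
    refine ⟨j₀, F₀, hj₀1, le_of_eq hcard, ?_⟩
    have : 2 * i - 1 = 1 := by omega
    rw [this]
    exact hf
  · -- i ≥ 2
    have hkkn : D.φ.length = P.n (2 * D.j + 1) := hlen
    have hn2kk : P.n (2 * D.j + 1) = 2 * kk := by omega
    have hik : i ≤ kk := by omega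
    obtain ⟨F₀, hcard, _, hf⟩ := hodd (i - 1) (by omega) (by omega)
    have hQp : pref D.φ (2 * (i - 1)) ∈ QsSet :=
      pref_mem_qs hQφ (by omega) (by omega)
    obtain ⟨w, hw1, hσ⟩ := C.even_pos _ hQp
    refine ⟨w, F₀, hw1, ?_, ?_⟩
    · rw [← hσ]; exact le_of_eq hcard
    · have hidx : 2 * (i - 1) + 1 = 2 * i - 1 := by omega
      rw [hidx] at hf
      rw [hf, hσ]

lemma pieceT_tform (hv : D.Valid P C) {i : ℕ} (hi1 : 1 ≤ i)
    (hi2 : 2 * i ≤ P.n (2 * D.j + 1)) :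
    ∃ (w : ℕ) (F₁ : Finset ℕ), 1 ≤ w ∧ F₁.card ≤ P.n (2 * w) ∧
      D.piece (i, true) = ((P.m (2 * w) : ℝ))⁻¹ • ∑ l ∈ F₁, e l := by
  classical
  obtain ⟨w, F₀, hw1, hcard, hf⟩ := fC_odd_tform hv hi1 hi2
  refine ⟨w, F₀.filter (fun l => l ∈ D.E), hw1,
    le_trans (Finset.card_filter_le _ _) hcard, ?_⟩
  have hpiece : D.piece (i, true) = restrictTo D.E (fC D.φ (2 * i - 1)) := rfl
  rw [hpiece, hf, restrict_tform]

lemma i_le_halfn {i : ℕ} (hi2 : 2 * i ≤ P.n (2 * D.j + 1)) :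
    i ≤ P.n (2 * D.j + 1) / 2 := by omega

lemma value_on_pieceT (hv : D.Valid P C) {i : ℕ} (hi1 : 1 ≤ i)
    (hi2 : 2 * i ≤ P.n (2 * D.j + 1)) {t : ℕ}
    (ht : t ∈ (D.piece (i, true)).support) :
    BNode.value P D t
      = (D.eps * ((P.m (2 * D.j + 1) : ℝ))⁻¹ * D.lam i) * D.piece (i, true) t := by
  classical
  obtain ⟨hQφ, hlenφ⟩ := valid_unpack hv
  have hsupp' : ∀ i', 1 ≤ i' → 2 * i' ≤ P.n (2 * D.j + 1) →
      (D.f' i').support = (fC D.φ (2 * i')).support := by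
    obtain ⟨hj, hε, hE, N, hadm, hcl⟩ := hv
    exact fun i' h1 h2 => (hcl i' h1 h2).2.1
  have hpiece : D.piece (i, true) = restrictTo D.E (fC D.φ (2 * i - 1)) := rfl
  rw [hpiece] at ht ⊢
  obtain ⟨htE, htf⟩ := Aux.mem_support_restrictTo.mp ht
  rw [value_apply, if_pos htE]
  have hsum : ∑ i' ∈ Finset.Icc 1 (P.n (2 * D.j + 1) / 2),
      (D.lam i' * fC D.φ (2 * i' - 1) t + D.f' i' t)
      = D.lam i * fC D.φ (2 * i - 1) t := by
    rw [Finset.sum_eq_single_of_mem i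
      (Finset.mem_Icc.mpr ⟨hi1, i_le_halfn hi2⟩)]
    · have hf'zero : D.f' i t = 0 := by
        by_contra hne
        have : t ∈ (D.f' i).support := Finsupp.mem_support_iff.mpr hne
        rw [hsupp' i hi1 hi2] at this
        exact fC_disjoint hQφ (by omega) (by omega) (by omega)
          (by omega) (by omega) htf this
      rw [hf'zero, add_zero]
    · intro i' hi' hne
      obtain ⟨h1', h2'⟩ := Finset.mem_Icc.mp hi'
      have h2i' : 2 * i' ≤ P.n (2 * D.j + 1) := by
        have := Nat.div_mul_le_self (P.n (2 * D.j + 1)) 2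
        omega
      have hz1 : fC D.φ (2 * i' - 1) t = 0 := by
        by_contra hne'
        exact fC_disjoint hQφ (by omega) (by omega) (by omega)
          (by omega) (by omega) (Finsupp.mem_support_iff.mpr hne') htf
      have hz2 : D.f' i' t = 0 := by
        by_contra hne'
        have : t ∈ (D.f' i').support := Finsupp.mem_support_iff.mpr hne'
        rw [hsupp' i' h1' h2i'] at this
        exact fC_disjoint hQφ (by omega) (by omega) (by omega)
          (by omega) (by omega) this htf
      rw [hz1, hz2]; ring
  rw [hsum, Aux.restrictTo_apply, if_pos htE]
  ring

lemma value_on_pieceF (hv : D.Valid P C) {i : ℕ} (hi1 : 1 ≤ i)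
    (hi2 : 2 * i ≤ P.n (2 * D.j + 1)) {t : ℕ}
    (ht : t ∈ (D.piece (i, false)).support) :
    BNode.value P D t
      = (D.eps * ((P.m (2 * D.j + 1) : ℝ))⁻¹) * D.piece (i, false) t := by
  classical
  obtain ⟨hQφ, hlenφ⟩ := valid_unpack hv
  have hsupp' : ∀ i', 1 ≤ i' → 2 * i' ≤ P.n (2 * D.j + 1) →
      (D.f' i').support = (fC D.φ (2 * i')).support := by
    obtain ⟨hj, hε, hE, N, hadm, hcl⟩ := hv
    exact fun i' h1 h2 => (hcl i' h1 h2).2.1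
  have hpiece : D.piece (i, false) = restrictTo D.E (D.f' i) := rfl
  rw [hpiece] at ht ⊢
  obtain ⟨htE, htf'⟩ := Aux.mem_support_restrictTo.mp ht
  have htf : t ∈ (fC D.φ (2 * i)).support := by
    rw [← hsupp' i hi1 hi2]; exact htf'
  rw [value_apply, if_pos htE]
  have hsum : ∑ i' ∈ Finset.Icc 1 (P.n (2 * D.j + 1) / 2),
      (D.lam i' * fC D.φ (2 * i' - 1) t + D.f' i' t) = D.f' i t := by
    rw [Finset.sum_eq_single_of_mem i
      (Finset.mem_Icc.mpr ⟨hi1, i_le_halfn hi2⟩)]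
    · have hz : fC D.φ (2 * i - 1) t = 0 := by
        by_contra hne'
        exact fC_disjoint hQφ (by omega) (by omega) (by omega)
          (by omega) (by omega) (Finsupp.mem_support_iff.mpr hne') htf
      rw [hz]; ring
    · intro i' hi' hne
      obtain ⟨h1', h2'⟩ := Finset.mem_Icc.mp hi'
      have h2i' : 2 * i' ≤ P.n (2 * D.j + 1) := by
        have := Nat.div_mul_le_self (P.n (2 * D.j + 1)) 2
        omega
      have hz1 : fC D.φ (2 * i' - 1) t = 0 := by
        by_contra hne'
        exact fC_disjoint hQφ (by omega) (by omega) (by omega)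
          (by omega) (by omega) (Finsupp.mem_support_iff.mpr hne') htf
      have hz2 : D.f' i' t = 0 := by
        by_contra hne'
        have : t ∈ (D.f' i').support := Finsupp.mem_support_iff.mpr hne'
        rw [hsupp' i' h1' h2i'] at this
        exact fC_disjoint hQφ (by omega) (by omega) (by omega)
          (by omega) (by omega) this htf
      rw [hz1, hz2]; ring
  rw [hsum, Aux.restrictTo_apply, if_pos htE]

lemma value_on_piece (hv : D.Valid P C) {p : ℕ × Bool} (h1 : 1 ≤ p.1)
    (h2 : 2 * p.1 ≤ P.n (2 * D.j + 1)) :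
    ∃ c : ℝ, c ≠ 0 ∧ |c| ≤ 1 / 2 ∧
      ∀ t ∈ (D.piece p).support, BNode.value P D t = c * D.piece p t := by
  have hm : 2 ≤ P.m (2 * D.j + 1) := Aux.two_le_m P _ (by omega)
  have hm' : (2:ℝ) ≤ (P.m (2 * D.j + 1) : ℝ) := by exact_mod_cast hm
  have hminv : |((P.m (2 * D.j + 1) : ℝ))⁻¹| ≤ 1 / 2 := by
    rw [abs_of_nonneg (by positivity)]
    rw [inv_le_comm₀ (by linarith) (by norm_num)]
    linarith
  have heps : |D.eps| = 1 := by
    rcases hv.2.1 with h | h <;> rw [h] <;> simp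
  have hepsne : D.eps ≠ 0 := by
    intro h; rw [h] at heps; simp at heps
  rcases p with ⟨i, b⟩
  simp only at h1 h2
  cases b
  · refine ⟨D.eps * ((P.m (2 * D.j + 1) : ℝ))⁻¹, ?_, ?_, ?_⟩
    · exact mul_ne_zero hepsne (by positivity)
    · rw [abs_mul, heps, one_mul]; exact hminv
    · intro t ht; exact value_on_pieceF hv h1 h2 ht
  · obtain ⟨hlamne, hlam1⟩ := lam_facts hv h1 h2
    refine ⟨D.eps * ((P.m (2 * D.j + 1) : ℝ))⁻¹ * D.lam i, ?_, ?_, ?_⟩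
    · exact mul_ne_zero (mul_ne_zero hepsne (by positivity)) hlamne
    · rw [abs_mul, abs_mul, heps, one_mul]
      calc |((P.m (2 * D.j + 1) : ℝ))⁻¹| * |D.lam i|
          ≤ (1/2) * 1 := by
            refine mul_le_mul hminv hlam1 (abs_nonneg _) (by norm_num)
        _ = 1/2 := by norm_num
    · intro t ht; exact value_on_pieceT hv h1 h2 ht

end BFacts

/-! ### Tree structure lemmas -/

section TreeStruct

variable {P : Params} {C : Coding P} (T : KTree P C)

lemma childL_getElem {α : List ℕ} {r : ℕ} (hr : r < deg T.A α) :
    ((List.range (deg T.A α)).map fun i => T.F (α ++ [i]))[r]'(by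
      simpa using hr) = T.F (α ++ [r]) := by
  simp

lemma children_eq_piece {β : List ℕ} (hβ : β ∈ T.A) {D : BNode}
    (hD : T.B β = some D) :
    (BNode.posList P D).length = deg T.A β ∧
      ∀ r (hr : r < deg T.A β),
        T.F (β ++ [r]) = D.piece ((BNode.posList P D)[r]'(by
          have := congrArg List.length (T.nodeB β hβ D hD).2.2.2
          simp at this
          omega)) := by
  have hlist := (T.nodeB β hβ D hD).2.2.2
  have hlen : (BNode.posList P D).length = deg T.A β := by
    have := congrArg List.length hlist
    simp at this
    omega
  refine ⟨hlen, fun r hr => ?_⟩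
  have h1 := List.getElem_of_eq hlist (by simpa using hr)
  rw [childL_getElem T hr] at h1
  rw [h1, List.getElem_map]

lemma F_ne_zero : ∀ α ∈ T.A, T.F α ≠ 0 := by
  have key : ∀ n (α : List ℕ), α ∈ T.A → T.A.sup List.length - α.length ≤ n →
      T.F α ≠ 0 := by
    intro n
    induction n with
    | zero =>
      intro α hα hn
      have hleaf : α ++ [0] ∉ T.A := by
        intro hc
        have h1 : (α ++ [0]).length ≤ T.A.sup List.length := Finset.le_sup hc
        have h2 : (α ++ [0]).length = α.length + 1 := by
          rw [List.length_append, List.length_singleton]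
        omega
      obtain ⟨k, hk | hk⟩ := T.leaf α hα hleaf <;> rw [hk]
      · exact Aux.e_ne_zero k
      · simp only [ne_eq, neg_eq_zero]
        exact Aux.e_ne_zero k
    | succ n ih =>
      intro α hα hn
      by_cases hleaf : α ++ [0] ∈ T.A
      case neg =>
        obtain ⟨k, hk | hk⟩ := T.leaf α hα hleaf <;> rw [hk]
        · exact Aux.e_ne_zero k
        · simp only [ne_eq, neg_eq_zero]
          exact Aux.e_ne_zero k
      case pos =>
      have hα0len : (α ++ [0]).length ≤ T.A.sup List.length := Finset.le_sup hleaf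
      have hlen' : α.length < T.A.sup List.length := by
        have h2 : (α ++ [0]).length = α.length + 1 := by
          rw [List.length_append, List.length_singleton]
        omega
      have hchild_ne : ∀ i, α ++ [i] ∈ T.A → T.F (α ++ [i]) ≠ 0 := by
        intro i hi
        refine ih (α ++ [i]) hi ?_
        have h2 : (α ++ [i]).length = α.length + 1 := by
          rw [List.length_append, List.length_singleton]
        omega
      have hdeg0 : 0 < deg T.A α := mem_child_lt_deg T hleaf
      cases hB : T.B α with
      | none =>
        obtain ⟨j, hj, hdegn, hch, hsum⟩ := T.nodeA α hα hleaf hB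
        -- pairwise blockLt of children
        have hLmem : ∀ g ∈ (List.range (deg T.A α)).map fun i => T.F (α ++ [i]),
            g ≠ 0 := by
          intro g hg
          simp only [List.mem_map, List.mem_range] at hg
          obtain ⟨i, hi, rfl⟩ := hg
          exact hchild_ne i (child_mem_of_lt_deg T hi)
        have hpw := Aux.chain'_pairwise _ hch ?_
        swap
        · intro a ha b hb c hc hab hbc
          intro s hs t ht
          obtain ⟨u, hu⟩ := Aux.supp_ne (hLmem b hb)
          exact lt_trans (hab s hs u hu) (hbc u hu t ht)
        have hsib : ∀ i i', i < i' → i' < deg T.A α →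
            blockLt (T.F (α ++ [i])) (T.F (α ++ [i'])) := by
          intro i i' hii hi'
          have := List.pairwise_iff_get.mp hpw
            ⟨i, by simpa using lt_trans hii hi'⟩ ⟨i', by simpa using hi'⟩ hii
          simpa using this
        obtain ⟨t, ht⟩ := Aux.supp_ne (hchild_ne 0 hleaf)
        have hsumt : (∑ i ∈ Finset.range (deg T.A α), T.F (α ++ [i])) t
            = T.F (α ++ [0]) t := by
          rw [Finsupp.finset_sum_apply]
          rw [Finset.sum_eq_single_of_mem 0 (Finset.mem_range.mpr hdeg0)]
          intro i' hi' hne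
          by_contra hne'
          exact Aux.blockLt_not_mem
            (hsib 0 i' (by omega) (Finset.mem_range.mp hi')) ht
            (Finsupp.mem_support_iff.mpr hne')
        have hm : 2 ≤ P.m (2 * j) := Aux.two_le_m P _ (by omega)
        have hm' : (2:ℝ) ≤ (P.m (2 * j) : ℝ) := by exact_mod_cast hm
        intro hzero
        have := congrArg (fun z : c00 => z t) hzero
        simp only [hsum, Finsupp.smul_apply, Finsupp.coe_zero, Pi.zero_apply] at this
        rw [hsumt] at this
        have h0 : T.F (α ++ [0]) t ≠ 0 := Finsupp.mem_support_iff.mp ht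
        have hinv : ((P.m (2 * j) : ℝ))⁻¹ ≠ 0 := by positivity
        rw [smul_eq_mul] at this
        exact h0 (by
          field_simp at this
          simpa using this)
      | some D =>
        obtain ⟨_, hv, hFval, _⟩ := T.nodeB α hα D hB
        obtain ⟨hplen, hpeq⟩ := children_eq_piece T hα hB
        have hp0 : (BNode.posList P D)[0]'(by omega) ∈ BNode.posList P D :=
          List.getElem_mem _
        obtain ⟨hpne, hp1, hp2⟩ := BFacts.posList_mem_facts hp0
        obtain ⟨c, hc0, hc12, hcid⟩ := BFacts.value_on_piece hv hp1 hp2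
        obtain ⟨t, ht⟩ := Aux.supp_ne hpne
        intro hzero
        have := congrArg (fun z : c00 => z t) hzero
        simp only [hFval, Finsupp.coe_zero, Pi.zero_apply] at this
        rw [hcid t ht] at this
        exact (Finsupp.mem_support_iff.mp ht) (by
          rcases mul_eq_zero.mp this with h | h
          · exact absurd h hc0
          · exact h)
  intro α hα
  exact key (T.A.sup List.length - α.length) α hα le_rfl

lemma sib_blockLt {α : List ℕ} (hα : α ∈ T.A) {i i' : ℕ} (hii : i < i')
    (hi' : i' < deg T.A α) : blockLt (T.F (α ++ [i])) (T.F (α ++ [i'])) := by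
  have h0 : α ++ [0] ∈ T.A := child_mem_of_lt_deg T (by omega)
  cases hB : T.B α with
  | none =>
    obtain ⟨j, hj, hdegn, hch, hsum⟩ := T.nodeA α hα h0 hB
    have hLmem : ∀ g ∈ (List.range (deg T.A α)).map fun i => T.F (α ++ [i]),
        g ≠ 0 := by
      intro g hg
      simp only [List.mem_map, List.mem_range] at hg
      obtain ⟨i'', hi'', rfl⟩ := hg
      exact F_ne_zero T _ (child_mem_of_lt_deg T hi'')
    have hpw := Aux.chain'_pairwise _ hch ?_
    swap
    · intro a ha b hb c hc hab hbc
      intro s hs t ht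
      obtain ⟨u, hu⟩ := Aux.supp_ne (hLmem b hb)
      exact lt_trans (hab s hs u hu) (hbc u hu t ht)
    have := List.pairwise_iff_get.mp hpw
      ⟨i, by simpa using lt_trans hii hi'⟩ ⟨i', by simpa using hi'⟩ hii
    simpa using this
  | some D =>
    obtain ⟨_, hv, hFval, _⟩ := T.nodeB α hα D hB
    obtain ⟨hplen, hpeq⟩ := children_eq_piece T hα hB
    rw [hpeq i (by omega), hpeq i' hi']
    have hpwp := BFacts.posList_pairwise_pidx (P := P) (D := D)
    have hpidx := List.pairwise_iff_get.mp hpwp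
      ⟨i, by omega⟩ ⟨i', by omega⟩ hii
    obtain ⟨_, h1, h2⟩ := BFacts.posList_mem_facts
      (List.getElem_mem (l := BNode.posList P D) (n := i) (h := by omega))
    obtain ⟨_, h1', h2'⟩ := BFacts.posList_mem_facts
      (List.getElem_mem (l := BNode.posList P D) (n := i') (h := by omega))
    exact BFacts.piece_blockLt hv h1 h2 h1' h2' (by simpa using hpidx)

lemma edge {α : List ℕ} (hα : α ∈ T.A) {i : ℕ} (hchild : α ++ [i] ∈ T.A) :
    ∃ c : ℝ, c ≠ 0 ∧ |c| ≤ 1 / 2 ∧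
      ∀ t ∈ (T.F (α ++ [i])).support, T.F α t = c * T.F (α ++ [i]) t := by
  have hideg : i < deg T.A α := mem_child_lt_deg T hchild
  have h0 : α ++ [0] ∈ T.A := child_mem_of_lt_deg T (by omega)
  cases hB : T.B α with
  | none =>
    obtain ⟨j, hj, hdegn, hch, hsum⟩ := T.nodeA α hα h0 hB
    have hm : 2 ≤ P.m (2 * j) := Aux.two_le_m P _ (by omega)
    have hm' : (2:ℝ) ≤ (P.m (2 * j) : ℝ) := by exact_mod_cast hm
    refine ⟨((P.m (2 * j) : ℝ))⁻¹, by positivity, ?_, ?_⟩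
    · rw [abs_of_nonneg (by positivity)]
      rw [inv_le_comm₀ (by linarith) (by norm_num)]
      linarith
    · intro t ht
      have hsumt : (∑ i'' ∈ Finset.range (deg T.A α), T.F (α ++ [i''])) t
          = T.F (α ++ [i]) t := by
        rw [Finsupp.finset_sum_apply]
        rw [Finset.sum_eq_single_of_mem i (Finset.mem_range.mpr hideg)]
        intro i' hi' hne
        by_contra hne'
        rcases Nat.lt_or_ge i' i with hlt | hge
        · exact Aux.blockLt_not_mem (sib_blockLt T hα hlt hideg)
            (Finsupp.mem_support_iff.mpr hne') ht
        · exact Aux.blockLt_not_mem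
            (sib_blockLt T hα (by omega) (Finset.mem_range.mp hi')) ht
            (Finsupp.mem_support_iff.mpr hne')
      rw [hsum, Finsupp.smul_apply, hsumt, smul_eq_mul]
  | some D =>
    obtain ⟨_, hv, hFval, _⟩ := T.nodeB α hα D hB
    obtain ⟨hplen, hpeq⟩ := children_eq_piece T hα hB
    obtain ⟨_, h1, h2⟩ := BFacts.posList_mem_facts
      (List.getElem_mem (l := BNode.posList P D) (n := i) (h := by omega))
    obtain ⟨c, hc0, hc12, hcid⟩ := BFacts.value_on_piece hv h1 h2
    refine ⟨c, hc0, hc12, ?_⟩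
    intro t ht
    rw [hpeq i hideg] at ht ⊢
    have h3 := congrArg (fun z : c00 => z t) hFval
    rw [h3]
    exact hcid t ht

lemma supp_child_subset {α : List ℕ} (hα : α ∈ T.A) {i : ℕ}
    (hchild : α ++ [i] ∈ T.A) :
    (T.F (α ++ [i])).support ⊆ (T.F α).support := by
  obtain ⟨c, hc0, _, hcid⟩ := edge T hα hchild
  intro t ht
  rw [Finsupp.mem_support_iff, hcid t ht]
  exact mul_ne_zero hc0 (Finsupp.mem_support_iff.mp ht)

lemma supp_prefix_aux : ∀ (ρ δ : List ℕ), δ ++ ρ ∈ T.A →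
    (T.F (δ ++ ρ)).support ⊆ (T.F δ).support := by
  intro ρ
  induction ρ using List.reverseRecOn with
  | nil => intro δ h; simp
  | append_singleton ρ' i ih =>
    intro δ h
    rw [← List.append_assoc] at h ⊢
    have h1 : δ ++ ρ' ∈ T.A := (T.downward (δ ++ ρ') i h).1
    exact (supp_child_subset T h1 h).trans (ih δ h1)

lemma supp_isPrefix {δ α : List ℕ} (h : δ <+: α) (hα : α ∈ T.A) :
    (T.F α).support ⊆ (T.F δ).support := by
  obtain ⟨ρ, rfl⟩ := h
  exact supp_prefix_aux T ρ δ hα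

lemma root_coeff : ∀ (α : List ℕ), α ∈ T.A → ∃ c : ℝ, c ≠ 0 ∧
    |c| ≤ (1/2 : ℝ) ^ α.length ∧
    ∀ t ∈ (T.F α).support, T.F [] t = c * T.F α t := by
  intro α
  induction α using List.reverseRecOn with
  | nil =>
    intro _
    exact ⟨1, one_ne_zero, by norm_num, fun t _ => by ring⟩
  | append_singleton δ i ih =>
    intro hα
    have hδ : δ ∈ T.A := (T.downward δ i hα).1
    obtain ⟨c₀, hc₀0, hc₀b, hc₀id⟩ := ih hδ
    obtain ⟨c₁, hc₁0, hc₁b, hc₁id⟩ := edge T hδ hα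
    refine ⟨c₀ * c₁, mul_ne_zero hc₀0 hc₁0, ?_, ?_⟩
    · rw [abs_mul, List.length_append, List.length_singleton, pow_succ]
      exact mul_le_mul hc₀b hc₁b (abs_nonneg _) (by positivity)
    · intro t ht
      have ht' : t ∈ (T.F δ).support := supp_child_subset T hδ hα ht
      rw [hc₀id t ht', hc₁id t ht]
      ring

lemma subtree_blockLt {δ : List ℕ} {u v : ℕ} {ρ ρ' : List ℕ}
    (huv : u < v) (hu : δ ++ u :: ρ ∈ T.A) (hv : δ ++ v :: ρ' ∈ T.A) :
    blockLt (T.F (δ ++ u :: ρ)) (T.F (δ ++ v :: ρ')) := by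
  have hδ : δ ∈ T.A := mem_of_isPrefix T ⟨u :: ρ, rfl⟩ hu
  have hequ : δ ++ u :: ρ = (δ ++ [u]) ++ ρ := by simp
  have heqv : δ ++ v :: ρ' = (δ ++ [v]) ++ ρ' := by simp
  have hmu : δ ++ [u] ∈ T.A := by
    refine mem_of_isPrefix T ⟨ρ, ?_⟩ hu
    rw [← hequ]
  have hmv : δ ++ [v] ∈ T.A := by
    refine mem_of_isPrefix T ⟨ρ', ?_⟩ hv
    rw [← heqv]
  have hsib := sib_blockLt T hδ huv (mem_child_lt_deg T hmv)
  intro s hs t ht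
  refine hsib s ?_ t ?_
  · refine supp_isPrefix T ⟨ρ, ?_⟩ hu hs
    rw [← hequ]
  · refine supp_isPrefix T ⟨ρ', ?_⟩ hv ht
    rw [← heqv]

lemma exists_lcp : ∀ (a b : List ℕ), ¬ a <+: b → ¬ b <+: a →
    ∃ (δ : List ℕ) (u v : ℕ) (ρ ρ' : List ℕ),
      u ≠ v ∧ a = δ ++ u :: ρ ∧ b = δ ++ v :: ρ' := by
  intro a
  induction a with
  | nil => intro b h1 _; exact absurd (List.nil_prefix) h1
  | cons u a' ih =>
    intro b h1 h2
    cases b with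
    | nil => exact absurd (List.nil_prefix) h2
    | cons v b' =>
      by_cases huv : u = v
      · subst huv
        have h1' : ¬ a' <+: b' := fun h => h1 (List.cons_prefix_cons.mpr ⟨rfl, h⟩)
        have h2' : ¬ b' <+: a' := fun h => h2 (List.cons_prefix_cons.mpr ⟨rfl, h⟩)
        obtain ⟨δ, w, w', ρ, ρ', hww, ha, hb⟩ := ih b' h1' h2'
        exact ⟨u :: δ, w, w', ρ, ρ', hww, by rw [ha]; rfl, by rw [hb]; rfl⟩
      · exact ⟨[], u, v, a', b', huv, rfl, rfl⟩

lemma incomp_blockLt {α α' : List ℕ} (hα : α ∈ T.A) (hα' : α' ∈ T.A)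
    (h1 : ¬ α <+: α') (h2 : ¬ α' <+: α) :
    blockLt (T.F α) (T.F α') ∨ blockLt (T.F α') (T.F α) := by
  obtain ⟨δ, u, v, ρ, ρ', huv, ha, hb⟩ := exists_lcp α α' h1 h2
  subst ha hb
  rcases Nat.lt_or_ge u v with h | h
  · exact Or.inl (subtree_blockLt T h hα hα')
  · have h' : v < u := by omega
    exact Or.inr (subtree_blockLt T h' hα' hα)

end TreeStruct

/-! ### Block sequence and couple lemmas -/

section Couple

variable {P : Params} {C : Coding P} (T : KTree P C) {x : ℕ → c00}

lemma minSupp_le_maxSupp {z : c00} (h : z ≠ 0) : minSupp z ≤ maxSupp z :=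
  Aux.le_maxSupp (Aux.minSupp_mem h)

lemma blockseq_max_lt_min (hx : IsBlockSeq x) (a : ℕ) :
    maxSupp (x a) < minSupp (x (a + 1)) :=
  (hx a).2 _ (Aux.maxSupp_mem (hx a).1) _ (Aux.minSupp_mem (hx (a + 1)).1)

lemma blockseq_max_mono (hx : IsBlockSeq x) {a b : ℕ} (h : a ≤ b) :
    maxSupp (x a) ≤ maxSupp (x b) := by
  induction b with
  | zero =>
    have : a = 0 := by omega
    rw [this]
  | succ b' ih =>
    rcases Nat.eq_or_lt_of_le h with h1 | h1
    · rw [h1]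
    · have h2 : a ≤ b' := by omega
      calc maxSupp (x a) ≤ maxSupp (x b') := ih h2
        _ ≤ minSupp (x (b' + 1)) := le_of_lt (blockseq_max_lt_min hx b')
        _ ≤ maxSupp (x (b' + 1)) := minSupp_le_maxSupp (hx (b' + 1)).1

lemma inff_tform {k' : ℕ} {α : List ℕ} (hα : InFF P C T x k' α) :
    ∃ (w : ℕ) (F₁ : Finset ℕ), 1 ≤ w ∧ F₁.card ≤ P.n (2 * w) ∧
      T.F α = ((P.m (2 * w) : ℝ))⁻¹ • ∑ l ∈ F₁, e l := by
  obtain ⟨β, r, rfl, hαA, hα'A, ⟨hβA, D, hD, i, hpr, hpr1⟩, _, _, _⟩ := hα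
  obtain ⟨_, hv, _, _⟩ := T.nodeB β hβA D hD
  obtain ⟨hrlt, hrget⟩ := List.getElem?_eq_some_iff.mp hpr
  obtain ⟨hplen, hpeq⟩ := children_eq_piece T hβA hD
  have hmem : (i, true) ∈ BNode.posList P D := by
    rw [← hrget]; exact List.getElem_mem _
  obtain ⟨_, h1, h2⟩ := BFacts.posList_mem_facts hmem
  simp only at h1 h2
  obtain ⟨w, F₁, hw, hF₁, hform⟩ := BFacts.pieceT_tform hv h1 h2
  refine ⟨w, F₁, hw, hF₁, ?_⟩
  rw [hpeq r (by omega), hrget, hform]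

lemma inff_dot_bound {k' : ℕ} {α : List ℕ} (hα : InFF P C T x k' α) (z : c00) :
    |dot (T.F α) z| ≤ normKt P z := by
  obtain ⟨w, F₁, hw, hF₁, hform⟩ := inff_tform T hα
  rw [hform]
  exact Aux.abs_dot_tform_le P hw hF₁ z

lemma inff_len_pos {k' : ℕ} {α : List ℕ} (hα : InFF P C T x k' α) :
    1 ≤ α.length := by
  obtain ⟨β, r, rfl, _⟩ := hα
  rw [List.length_append, List.length_singleton]
  omega

end Couple

/-! ### The key length-monotonicity lemma -/

section ClaimB

variable {P : Params} {C : Coding P} (T : KTree P C) {x : ℕ → c00}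

lemma claimAB (hx : IsBlockSeq x) {k : ℕ} {α α' : List ℕ}
    (hαF : α ∈ FFall P C T x) (hα'F : α' ∈ FFall P C T x)
    (hαA : α ∈ T.A) (hα'A : α' ∈ T.A)
    (hmeet : ∃ t, t ∈ (T.F α).support ∧ t ∈ (x k).support)
    (hmeet' : ∃ t, t ∈ (T.F α').support ∧ t ∈ (x k).support)
    (hbefore : ∃ α₀, α₀ ∈ T.A ∧ (∃ t₀, t₀ ∈ (T.F α₀).support ∧ t₀ ∈ (x k).support)
      ∧ blockLt (T.F α₀) (T.F α))
    (hinc1 : ¬ α <+: α') (hinc2 : ¬ α' <+: α)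
    (hlt : blockLt (T.F α) (T.F α')) :
    α.length < α'.length := by
  classical
  obtain ⟨t, htα, htk⟩ := hmeet
  obtain ⟨t', ht'α, ht'k⟩ := hmeet'
  obtain ⟨k', hIn⟩ := hαF
  obtain ⟨β, r, hαeq, hαA', hαpA, hdep, hk0, hminmax, hminp⟩ := hIn
  subst hαeq
  have hFαne : T.F (β ++ [r]) ≠ 0 := F_ne_zero T _ hαA
  have hFα'ne : T.F α' ≠ 0 := F_ne_zero T _ hα'A
  have hFαpne : T.F (β ++ [r + 1]) ≠ 0 := F_ne_zero T _ hαpA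
  -- first: the witness k' equals k
  have hk'lek : k' ≤ k := by
    by_contra hgt
    push_neg at hgt
    rcases hk0 with h | h
    · omega
    · have h1 : minSupp (T.F (β ++ [r])) ≤ t := Aux.minSupp_le htα
      have h2 : t ≤ maxSupp (x k) := Aux.le_maxSupp htk
      have h3 : maxSupp (x k) ≤ maxSupp (x (k' - 1)) :=
        blockseq_max_mono hx (by omega)
      omega
  have hkeq : k' = k := by
    by_contra hne
    have hk'ltk : k' < k := by omega
    obtain ⟨α₀, hα₀A, ⟨t₀, ht₀α, ht₀k⟩, hblt⟩ := hbefore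
    have h1 : t₀ < minSupp (T.F (β ++ [r])) :=
      hblt t₀ ht₀α _ (Aux.minSupp_mem hFαne)
    have h2 : minSupp (T.F (β ++ [r])) ≤ maxSupp (x k') := hminmax
    have h3 : maxSupp (x k') ≤ maxSupp (x (k - 1)) :=
      blockseq_max_mono hx (by omega)
    have h4 : maxSupp (x (k - 1)) < minSupp (x k) := by
      have h5 := blockseq_max_lt_min hx (k - 1)
      have hk1 : k - 1 + 1 = k := by omega
      rw [hk1] at h5
      exact h5
    have h5 : minSupp (x k) ≤ t₀ := Aux.minSupp_le ht₀k
    omega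
  subst hkeq
  -- trichotomy versus the partner β ++ [r+1]
  by_cases hpp : (β ++ [r + 1]) <+: α'
  · -- α' extends the partner; show the extension is proper
    have hne : β ++ [r + 1] ≠ α' := by
      intro heq
      obtain ⟨k'', hIn'⟩ := hα'F
      obtain ⟨β', r', hα'eq, _, _, ⟨hβ'A, D', hD', i', hpr', _⟩, _⟩ := hIn'
      obtain ⟨hβA, D, hD, i, hpr, hpr1⟩ := hdep
      have heq2 : β' ++ [r'] = β ++ [r + 1] := by rw [← hα'eq, heq]
      have hlen : β'.length = β.length := by
        have := congrArg List.length heq2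
        simp at this
        omega
      obtain ⟨hββ, hrr⟩ := List.append_inj heq2 hlen
      have hrr' : r' = r + 1 := by simpa using hrr
      subst hββ
      rw [hD] at hD'
      injection hD' with hDD
      subst hDD
      rw [hrr'] at hpr'
      have := hpr'.symm.trans hpr1
      simp at this
    have hle := List.IsPrefix.length_le hpp
    rcases Nat.eq_or_lt_of_le hle with h | h
    · exact absurd (List.IsPrefix.eq_of_length hpp h) hne
    · have e1 : (β ++ [r]).length = β.length + 1 := by simp
      have e2 : (β ++ [r + 1]).length = β.length + 1 := by simp
      omega
  · by_cases hpp2 : α' <+: (β ++ [r + 1])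
    · -- α' a proper prefix of the partner: contradiction with incomparability
      have hne : α' ≠ β ++ [r + 1] := fun h => hpp (h ▸ List.prefix_refl _)
      have hlen : α'.length ≤ β.length := by
        have h1 := List.IsPrefix.length_le hpp2
        have e2 : (β ++ [r + 1]).length = β.length + 1 := by simp
        rcases Nat.eq_or_lt_of_le h1 with h | h
        · exact absurd (List.IsPrefix.eq_of_length hpp2 h) hne
        · omega
      have hβpre : α' <+: β :=
        List.prefix_of_prefix_length_le hpp2 (List.prefix_append β [r + 1]) hlen
      exact absurd (hβpre.trans (List.prefix_append β [r])) hinc2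
    · -- incomparable with the partner
      rcases incomp_blockLt T hαpA hα'A hpp hpp2 with hb | hb
      · -- partner entirely before α' : impossible since α' meets x_k
        exfalso
        have h2 := hb _ (Aux.maxSupp_mem hFαpne) t' ht'α
        have h3 : t' ≤ maxSupp (x k') := Aux.le_maxSupp ht'k
        have h4 : maxSupp (x k') < minSupp (x (k' + 1)) := blockseq_max_lt_min hx k'
        omega
      · -- α' before the partner: gap argument
        exfalso
        obtain ⟨δ, u, u', ρ, ρ', huu, hαdec, hα'dec⟩ :=
          exists_lcp (β ++ [r]) α' hinc1 hinc2
        subst hα'dec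
        have huu' : u < u' := by
          rcases Nat.lt_or_ge u u' with h | h
          · exact h
          · have h2 : u' < u := by omega
            exfalso
            have hgap := subtree_blockLt T h2 hα'A (hαdec ▸ hαA)
            rw [← hαdec] at hgap
            exact Aux.blockLt_asymm hFαne hFα'ne hlt hgap
        by_cases hρ : ρ = []
        · subst hρ
          have heq2 : δ ++ [u] = β ++ [r] := by rw [hαdec]
          have hlen : δ.length = β.length := by
            have := congrArg List.length heq2
            simp at this
            omega
          obtain ⟨hδβ, hur⟩ := List.append_inj heq2 hlen
          have hur' : u = r := by simpa using hur
          subst hδβ hur'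
          by_cases hu'r : u' = u + 1
          · subst hu'r
            exact hpp ⟨ρ', by simp⟩
          · have hlt2 : u + 1 < u' := by omega
            have hmem1 : δ ++ (u + 1) :: ([] : List ℕ) ∈ T.A := by
              simpa using hαpA
            have hgap := subtree_blockLt T hlt2 hmem1 hα'A
            have he : δ ++ (u + 1) :: ([] : List ℕ) = δ ++ [u + 1] := rfl
            rw [he] at hgap
            exact Aux.blockLt_asymm hFα'ne hFαpne hb hgap
        · have hlenρ : 1 ≤ ρ.length := List.length_pos_iff.mpr hρ
          have hlen1 : (δ ++ [u]).length ≤ β.length := by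
            have := congrArg List.length hαdec
            simp at this
            simp
            omega
          have hpre1 : δ ++ [u] <+: β ++ [r] := ⟨ρ, by rw [hαdec]; simp⟩
          have hpre2 : δ ++ [u] <+: β :=
            List.prefix_of_prefix_length_le hpre1 (List.prefix_append β [r]) hlen1
          have hpre3 : δ ++ [u] <+: β ++ [r + 1] :=
            hpre2.trans (List.prefix_append β [r + 1])
          obtain ⟨ξ, hξ⟩ := hpre3
          have hξ' : β ++ [r + 1] = δ ++ u :: ξ := by rw [← hξ]; simp
          have hmem1 : δ ++ u :: ξ ∈ T.A := by rw [← hξ']; exact hαpA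
          have hgap := subtree_blockLt T huu' hmem1 hα'A
          rw [← hξ'] at hgap
          exact Aux.blockLt_asymm hFα'ne hFαpne hb hgap

end ClaimB

/-! ### Counting lemma -/

lemma sum_Icc_half_pow (N : ℕ) : ∑ d ∈ Finset.Icc 1 N, (1/2 : ℝ)^d = 1 - (1/2)^N := by
  induction N with
  | zero => simp
  | succ N ih =>
    rw [Finset.sum_Icc_succ_top (by omega), ih]
    ring

lemma sum_two_pow_le (S : Finset ℕ) (hS : ∀ d ∈ S, 1 ≤ d) :
    ∑ d ∈ S, (1/2 : ℝ)^d ≤ 1 := by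
  have hsub : S ⊆ Finset.Icc 1 (S.sup id) := by
    intro d hd
    exact Finset.mem_Icc.mpr ⟨hS d hd, Finset.le_sup (f := id) hd⟩
  calc ∑ d ∈ S, (1/2 : ℝ)^d ≤ ∑ d ∈ Finset.Icc 1 (S.sup id), (1/2 : ℝ)^d := by
        refine Finset.sum_le_sum_of_subset_of_nonneg hsub ?_
        intro d _ _
        positivity
    _ = 1 - (1/2)^(S.sup id) := sum_Icc_half_pow _
    _ ≤ 1 := by
        have : (0:ℝ) ≤ (1/2)^(S.sup id) := by positivity
        linarith

end Ius
namespace Ius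

/-- If `(x_k)` is a block sequence with `‖x_k‖_K̃ ≤ σ_k`, `f ∈ K`
with a tree `(f_α)`, and `y_k` is the restriction of `x_k` to
`⋃_{α ∈ F_f} supp f_α`, then `|f(y_k)| ≤ 2 σ_k`. -/
theorem statement6 (P : Params) (C : Coding P) (x : ℕ → c00) (hx : IsBlockSeq x)
    (sl : ℕ → ℝ) (hsl : ∀ k, normKt P (x k) ≤ sl k)
    (f : c00) (hf : f ∈ Kset P C) (T : KTree P C) (hroot : T.F [] = f) (k : ℕ) :
    |dot f (yRes P C T x k)| ≤ 2 * sl k := by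
  classical
  have hsl0 : 0 ≤ sl k := le_trans (Aux.normKt_nonneg P (x k)) (hsl k)
  set y : c00 := yRes P C T x k with hy
  set G : Finset (List ℕ) := T.A.filter
    (fun α => α ∈ FFall P C T x ∧ ∃ t, t ∈ (T.F α).support ∧ t ∈ (x k).support)
    with hG
  set M : Finset (List ℕ) := G.filter (fun α => ∀ β ∈ G, β <+: α → β = α) with hM
  have hGm : ∀ {α : List ℕ}, α ∈ G ↔ α ∈ T.A ∧ α ∈ FFall P C T x ∧
      ∃ t, t ∈ (T.F α).support ∧ t ∈ (x k).support := by
    intro α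
    rw [hG, Finset.mem_filter]
  have hMsub : M ⊆ G := Finset.filter_subset _ _
  have hMA : ∀ α ∈ M, α ∈ T.A := fun α hα => (hGm.mp (hMsub hα)).1
  have hMFF : ∀ α ∈ M, α ∈ FFall P C T x := fun α hα => (hGm.mp (hMsub hα)).2.1
  have hMmeet : ∀ α ∈ M, ∃ t, t ∈ (T.F α).support ∧ t ∈ (x k).support :=
    fun α hα => (hGm.mp (hMsub hα)).2.2
  -- existence of minimal prefixes
  have hMex : ∀ α ∈ G, ∃ α₀ ∈ M, α₀ <+: α := by
    have key : ∀ n, ∀ α ∈ G, α.length ≤ n → ∃ α₀ ∈ M, α₀ <+: α := by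
      intro n
      induction n with
      | zero =>
        intro α hα hlen
        refine ⟨α, ?_, List.prefix_refl _⟩
        rw [hM, Finset.mem_filter]
        refine ⟨hα, fun β hβ hpre => ?_⟩
        have h1 := List.IsPrefix.length_le hpre
        exact List.IsPrefix.eq_of_length hpre (by omega)
      | succ n ih =>
        intro α hα hlen
        by_cases hmin : ∀ β ∈ G, β <+: α → β = α
        · exact ⟨α, by rw [hM, Finset.mem_filter]; exact ⟨hα, hmin⟩, List.prefix_refl _⟩
        · push_neg at hmin
          obtain ⟨β, hβG, hβpre, hβne⟩ := hmin
          have hblen : β.length < α.length := by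
            have h1 := List.IsPrefix.length_le hβpre
            rcases Nat.eq_or_lt_of_le h1 with h | h
            · exact absurd (List.IsPrefix.eq_of_length hβpre h) hβne
            · exact h
          obtain ⟨α₀, hα₀M, hα₀pre⟩ := ih β hβG (by omega)
          exact ⟨α₀, hα₀M, hα₀pre.trans hβpre⟩
    intro α hα
    exact key α.length α hα le_rfl
  -- incomparability within M
  have hMinc : ∀ α ∈ M, ∀ α' ∈ M, α ≠ α' → ¬ α <+: α' := by
    intro α hα α' hα' hne hpre
    have h1 := (Finset.mem_filter.mp hα').2 α (hMsub hα) hpre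
    exact hne h1
  have hMord : ∀ α ∈ M, ∀ α' ∈ M, α ≠ α' →
      blockLt (T.F α) (T.F α') ∨ blockLt (T.F α') (T.F α) := by
    intro α hα α' hα' hne
    exact incomp_blockLt T (hMA α hα) (hMA α' hα')
      (hMinc α hα α' hα' hne) (hMinc α' hα' α hα hne.symm)
  -- support cover
  have hcover : ∀ t ∈ y.support, ∃ α ∈ M, t ∈ (T.F α).support := by
    intro t ht
    rw [hy, yRes] at ht
    obtain ⟨htU, htk⟩ := Aux.mem_support_restrictTo.mp ht
    simp only [Set.mem_iUnion, Finset.coe_sort_coe, Finset.mem_coe] at htU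
    obtain ⟨α, hαFF, htα⟩ := htU
    have hαA : α ∈ T.A := by
      obtain ⟨k', β, r, rfl, hA, _⟩ := hαFF
      exact hA
    have hαG : α ∈ G := hGm.mpr ⟨hαA, hαFF, t, htα, htk⟩
    obtain ⟨α₀, hα₀M, hpre⟩ := hMex α hαG
    exact ⟨α₀, hα₀M, supp_isPrefix T hpre hαA htα⟩
  -- disjointness of the pieces
  have hdisj : (↑M : Set (List ℕ)).PairwiseDisjoint
      (fun α => y.support ∩ (T.F α).support) := by
    intro α hα α' hα' hne
    simp only [Function.onFun]
    rw [Finset.disjoint_left]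
    intro t ht ht'
    have h1 : t ∈ (T.F α).support := (Finset.mem_inter.mp ht).2
    have h2 : t ∈ (T.F α').support := (Finset.mem_inter.mp ht').2
    rcases hMord α (Finset.mem_coe.mp hα) α' (Finset.mem_coe.mp hα') hne with h | h
    · exact Aux.blockLt_not_mem h h1 h2
    · exact Aux.blockLt_not_mem h h2 h1
  have hbi : y.support = M.biUnion (fun α => y.support ∩ (T.F α).support) := by
    ext t
    constructor
    · intro ht
      obtain ⟨α, hαM, htα⟩ := hcover t ht
      exact Finset.mem_biUnion.mpr ⟨α, hαM, Finset.mem_inter.mpr ⟨ht, htα⟩⟩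
    · intro ht
      obtain ⟨α, hαM, htα⟩ := Finset.mem_biUnion.mp ht
      exact (Finset.mem_inter.mp htα).1
  have hdot : dot f y = ∑ α ∈ M, ∑ t ∈ (y.support ∩ (T.F α).support), f t * y t := by
    rw [Aux.dot_eq_sum]
    conv_lhs => rw [hbi]
    exact Finset.sum_biUnion hdisj
  -- per-piece bound
  have hper : ∀ α ∈ M,
      |∑ t ∈ (y.support ∩ (T.F α).support), f t * y t| ≤ (1/2:ℝ)^α.length * sl k := by
    intro α hα
    have hαA := hMA α hα
    have hαFF := hMFF α hα
    obtain ⟨c, hc0, hcb, hcid⟩ := root_coeff T α hαA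
    set Sα : Finset ℕ := y.support ∩ (T.F α).support with hSα
    have hSsub : Sα ⊆ (x k).support := by
      intro t ht
      have h1 : t ∈ y.support := (Finset.mem_inter.mp ht).1
      rw [hy, yRes] at h1
      exact (Aux.mem_support_restrictTo.mp h1).2
    set zα : c00 := restrictTo (↑Sα : Set ℕ) (x k) with hzα
    have hzsupp : zα.support = Sα := by
      ext t
      rw [hzα, Aux.mem_support_restrictTo]
      constructor
      · intro ⟨h1, _⟩
        exact Finset.mem_coe.mp h1
      · intro h1
        exact ⟨Finset.mem_coe.mpr h1, hSsub h1⟩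
    have hsum : ∑ t ∈ Sα, f t * y t = c * dot (T.F α) zα := by
      rw [Aux.dot_eq_sum, hzsupp, Finset.mul_sum]
      refine Finset.sum_congr rfl fun t ht => ?_
      have htα : t ∈ (T.F α).support := (Finset.mem_inter.mp ht).2
      have hty : t ∈ y.support := (Finset.mem_inter.mp ht).1
      have h1 : f t = c * T.F α t := by
        rw [← hroot]
        exact hcid t htα
      have h2 : y t = x k t := by
        rw [hy, yRes] at hty ⊢
        rw [Aux.restrictTo_apply, if_pos (Aux.mem_support_restrictTo.mp hty).1]
      have h3 : zα t = x k t := by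
        rw [hzα, Aux.restrictTo_apply, if_pos (Finset.mem_coe.mpr ht)]
      rw [h1, h2, h3]
      ring
    rw [hsum, abs_mul]
    have hdotb : |dot (T.F α) zα| ≤ sl k := by
      obtain ⟨k', hIn⟩ := hαFF
      calc |dot (T.F α) zα| ≤ normKt P zα := inff_dot_bound T hIn zα
        _ ≤ normKt P (x k) := Aux.normKt_restrict_le P _ _
        _ ≤ sl k := hsl k
    exact mul_le_mul hcb hdotb (abs_nonneg _) (by positivity)
  have htotal : |dot f y| ≤ (∑ α ∈ M, (1/2:ℝ)^α.length) * sl k := by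
    rw [hdot]
    calc |∑ α ∈ M, ∑ t ∈ (y.support ∩ (T.F α).support), f t * y t|
        ≤ ∑ α ∈ M, |∑ t ∈ (y.support ∩ (T.F α).support), f t * y t| :=
          Finset.abs_sum_le_sum_abs _ _
      _ ≤ ∑ α ∈ M, (1/2:ℝ)^α.length * sl k := Finset.sum_le_sum hper
      _ = (∑ α ∈ M, (1/2:ℝ)^α.length) * sl k := by rw [← Finset.sum_mul]
  -- the counting bound
  have hlen1 : ∀ α ∈ M, 1 ≤ α.length := by
    intro α hα
    obtain ⟨k', hIn⟩ := hMFF α hα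
    exact inff_len_pos T hIn
  have hcount : (∑ α ∈ M, (1/2:ℝ)^α.length) ≤ 3/2 := by
    rcases M.eq_empty_or_nonempty with hMe | hMne
    · rw [hMe]
      simp
      norm_num
    · obtain ⟨α₁, hα₁M, hα₁min⟩ :=
        Finset.exists_min_image M (fun α => minSupp (T.F α)) hMne
      have hα₁first : ∀ α ∈ M, α ≠ α₁ → blockLt (T.F α₁) (T.F α) := by
        intro α hα hne
        rcases hMord α hα α₁ hα₁M hne with h | h
        · exfalso
          have h1 := h _ (Aux.minSupp_mem (F_ne_zero T _ (hMA α hα)))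
            _ (Aux.minSupp_mem (F_ne_zero T _ (hMA α₁ hα₁M)))
          have h2 := hα₁min α hα
          omega
        · exact h
      have hstrict : ∀ α ∈ M.erase α₁, ∀ α' ∈ M.erase α₁, α ≠ α' →
          blockLt (T.F α) (T.F α') → α.length < α'.length := by
        intro α hα α' hα' hne hblt
        obtain ⟨hne1, hαM⟩ := Finset.mem_erase.mp hα
        obtain ⟨hne1', hα'M⟩ := Finset.mem_erase.mp hα'
        refine claimAB T hx (hMFF α hαM) (hMFF α' hα'M) (hMA α hαM) (hMA α' hα'M)
          (hMmeet α hαM) (hMmeet α' hα'M)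
          ⟨α₁, hMA α₁ hα₁M, hMmeet α₁ hα₁M, hα₁first α hαM hne1⟩
          (hMinc α hαM α' hα'M hne) (hMinc α' hα'M α hαM hne.symm) hblt
      have hinj : Set.InjOn List.length (↑(M.erase α₁) : Set (List ℕ)) := by
        intro α hα α' hα' hlen
        by_contra hne
        have hαe := Finset.mem_coe.mp hα
        have hα'e := Finset.mem_coe.mp hα'
        rcases hMord α (Finset.mem_of_mem_erase hαe) α' (Finset.mem_of_mem_erase hα'e)
          hne with h | h
        · exact absurd hlen (Nat.ne_of_lt (hstrict α hαe α' hα'e hne h))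
        · exact absurd hlen.symm
            (Nat.ne_of_lt (hstrict α' hα'e α hαe (Ne.symm hne) h))
      have hssplit : ∑ α ∈ M, (1/2:ℝ)^α.length
          = (1/2:ℝ)^α₁.length + ∑ α ∈ M.erase α₁, (1/2:ℝ)^α.length :=
        (Finset.add_sum_erase M _ hα₁M).symm
      have h1 : (1/2:ℝ)^α₁.length ≤ 1/2 := by
        calc (1/2:ℝ)^α₁.length ≤ (1/2:ℝ)^1 :=
              pow_le_pow_of_le_one (by norm_num) (by norm_num) (hlen1 α₁ hα₁M)
          _ = 1/2 := pow_one _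
      have h2 : ∑ α ∈ M.erase α₁, (1/2:ℝ)^α.length ≤ 1 := by
        have himg : ∑ α ∈ M.erase α₁, (1/2:ℝ)^α.length
            = ∑ d ∈ (M.erase α₁).image List.length, (1/2:ℝ)^d := by
          rw [Finset.sum_image (fun a ha b hb hab => hinj ha hb hab)]
        rw [himg]
        refine sum_two_pow_le _ ?_
        intro d hd
        obtain ⟨α, hα, rfl⟩ := Finset.mem_image.mp hd
        exact hlen1 α (Finset.mem_of_mem_erase hα)
      rw [hssplit]
      linarith
  calc |dot f y| ≤ (∑ α ∈ M, (1/2:ℝ)^α.length) * sl k := htotal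
    _ ≤ (3/2) * sl k := mul_le_mul_of_nonneg_right hcount hsl0
    _ ≤ 2 * sl k := by linarith

end Ius
end
end

section
/- With q_j = 1/log_{4n_j}(m_j) = log(4n_j)/log(m_j), the sequence (q_j)_{j≥1} is strictly increasing and tends to infinity. -/
open scoped BigOperators
open Classical

noncomputable section

namespace Ius

lemma two_le_m (P : Params) : ∀ j, 1 ≤ j → 2 ≤ P.m j := by
  intro j hj
  obtain ⟨k, rfl⟩ := Nat.exists_eq_add_of_le hj
  induction k with
  | zero => simp [P.m_one]
  | succ k ih =>
    have ih' := ih (by omega)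
    have e : 1 + (k + 1) = (1 + k) + 1 := by omega
    rw [e, P.m_rec (1 + k) (by omega)]
    exact le_trans ih' (Nat.le_self_pow (by norm_num) _)

lemma four_le_n (P : Params) : ∀ j, 1 ≤ j → 4 ≤ P.n j := by
  intro j hj
  obtain ⟨k, rfl⟩ := Nat.exists_eq_add_of_le hj
  induction k with
  | zero => simp [P.n_one]
  | succ k ih =>
    have ih' := ih (by omega)
    have e : 1 + (k + 1) = (1 + k) + 1 := by omega
    rw [e, P.n_rec (1 + k) (by omega)]
    calc 4 ≤ 4 * P.n (1 + k) := by omega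
    _ ≤ (4 * P.n (1 + k)) ^ P.s (1 + k) :=
        Nat.le_self_pow (by have := P.s_pos (1 + k) (by omega); omega) _

lemma s_ge (P : Params) (j : ℕ) (hj : 1 ≤ j) : 15 ≤ P.s j := by
  have h1 := P.s_big j hj
  have h2 : 2 ≤ P.m j := two_le_m P j hj
  have h3 : P.m (j + 1) = P.m j ^ 5 := P.m_rec j hj
  have h4 : 2 ^ 15 ≤ P.m (j + 1) ^ 3 := by
    rw [h3, ← pow_mul]
    exact Nat.pow_le_pow_left h2 15
  have h5 : (2 : ℕ) ^ 15 ≤ 2 ^ P.s j := le_trans h4 h1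
  exact (Nat.pow_le_pow_iff_right one_lt_two).mp h5

lemma qexp_pos (P : Params) (j : ℕ) (hj : 1 ≤ j) : 0 < qexp P j := by
  have hm : (2 : ℝ) ≤ (P.m j : ℝ) := by exact_mod_cast two_le_m P j hj
  have hn : (4 : ℝ) ≤ (P.n j : ℝ) := by exact_mod_cast four_le_n P j hj
  apply div_pos
  · apply Real.log_pos; nlinarith
  · apply Real.log_pos; linarith

lemma qexp_step (P : Params) (j : ℕ) (hj : 1 ≤ j) :
    3 * qexp P j ≤ qexp P (j + 1) := by
  have hm : (2 : ℝ) ≤ (P.m j : ℝ) := by exact_mod_cast two_le_m P j hj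
  have hn : (4 : ℝ) ≤ (P.n j : ℝ) := by exact_mod_cast four_le_n P j hj
  have hs : (15 : ℝ) ≤ (P.s j : ℝ) := by exact_mod_cast s_ge P j hj
  have ha : 0 < Real.log (4 * (P.n j : ℝ)) := Real.log_pos (by linarith)
  have hb : 0 < Real.log (P.m j : ℝ) := Real.log_pos (by linarith)
  have hmrec : (P.m (j + 1) : ℝ) = (P.m j : ℝ) ^ 5 := by
    exact_mod_cast congrArg (Nat.cast : ℕ → ℝ) (P.m_rec j hj)
  have hnrec : (P.n (j + 1) : ℝ) = (4 * (P.n j : ℝ)) ^ P.s j := by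
    exact_mod_cast congrArg (Nat.cast : ℕ → ℝ) (P.n_rec j hj)
  have hlm : Real.log (P.m (j + 1) : ℝ) = 5 * Real.log (P.m j : ℝ) := by
    rw [hmrec, Real.log_pow]; push_cast; ring
  have hln : Real.log (4 * (P.n (j + 1) : ℝ))
      = Real.log 4 + (P.s j : ℝ) * Real.log (4 * (P.n j : ℝ)) := by
    rw [hnrec, Real.log_mul (by norm_num) (by positivity), Real.log_pow]
  have hlog4 : 0 ≤ Real.log 4 := Real.log_nonneg (by norm_num)
  unfold qexp
  rw [hlm, hln]
  have key : 15 * Real.log (4 * (P.n j : ℝ)) ≤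
      Real.log 4 + (P.s j : ℝ) * Real.log (4 * (P.n j : ℝ)) := by
    nlinarith [mul_le_mul_of_nonneg_right hs ha.le]
  calc 3 * (Real.log (4 * (P.n j : ℝ)) / Real.log (P.m j : ℝ))
      = (15 * Real.log (4 * (P.n j : ℝ))) / (5 * Real.log (P.m j : ℝ)) := by
        field_simp; ring
    _ ≤ (Real.log 4 + (P.s j : ℝ) * Real.log (4 * (P.n j : ℝ))) /
        (5 * Real.log (P.m j : ℝ)) := by
        gcongr

lemma qexp_lt_succ (P : Params) (j : ℕ) (hj : 1 ≤ j) : qexp P j < qexp P (j + 1) := by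
  have h1 := qexp_step P j hj
  have h2 := qexp_pos P j hj
  linarith

lemma qexp_ge (P : Params) : ∀ j : ℕ, 1 ≤ j → (j : ℝ) ≤ qexp P j := by
  intro j hj
  obtain ⟨k, rfl⟩ := Nat.exists_eq_add_of_le hj
  induction k with
  | zero =>
    have : qexp P 1 = 4 := by
      unfold qexp
      rw [P.n_one, P.m_one]
      have : (4 : ℝ) * (4 : ℕ) = 2 ^ 4 := by norm_num
      rw [this, Real.log_pow]
      have h2 : Real.log 2 ≠ 0 := ne_of_gt (Real.log_pos (by norm_num))
      push_cast
      field_simp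
    simp [this]
  | succ k ih =>
    have ih' := ih (by omega)
    have hpos := qexp_pos P (1 + k) (by omega)
    have hstep := qexp_step P (1 + k) (by omega)
    have e : 1 + (k + 1) = (1 + k) + 1 := by omega
    rw [e]
    push_cast
    push_cast at ih'
    have hk1 : (1 : ℝ) ≤ 1 + (k : ℝ) := by
      have : (0:ℝ) ≤ (k:ℝ) := Nat.cast_nonneg k
      linarith
    nlinarith

/-- The sequence `q_j = log(4n_j)/log(m_j)` is strictly increasing
(on `j ≥ 1`) and tends to infinity. -/
theorem statement8 (P : Params) :
    StrictMonoOn (fun j => qexp P j) {j : ℕ | 1 ≤ j} ∧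
    Filter.Tendsto (fun j => qexp P j) Filter.atTop Filter.atTop := by
  constructor
  · intro i hi j hj hij
    simp only [Set.mem_setOf_eq] at hi hj
    clear hj
    induction j with
    | zero => omega
    | succ k ih =>
      rcases Nat.lt_or_ge i k with h | h
      · exact lt_trans (ih h) (qexp_lt_succ P k (by omega))
      · have : i = k := by omega
        subst this
        exact qexp_lt_succ P i hi
  · apply Filter.tendsto_atTop_mono' _ _ tendsto_natCast_atTop_atTop
    filter_upwards [Filter.eventually_ge_atTop 1] with j hj
    exact qexp_ge P j hj


end Ius
end
end
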